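/- arXiv:2006.03754 — 4 statements merged into one kernel-verified Lean document; each statement's English description precedes it below -/
import Mathlib

section
/- Let n ≥ 2 be an integer and let 1 ≤ p₁,…,pₙ, r ≤ ∞. If the multilinear spherical average T is of strong type at (p₁,…,pₙ;r), then 1/r ≤ Σ_{j=1}^n 1/p_j. -/
open MeasureTheory ENNReal

/-- The `L^p` "norm" (with respect to Lebesgue measure on `ℝ`) of an
`ℝ≥0∞`-valued function, with the convention for `p = ∞`. -/
noncomputable def lpNorm (p : ℝ≥0∞) (g : ℝ → ℝ≥0∞) : ℝ≥0∞ :=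
  if p = ∞ then essSup g (volume : Measure ℝ)
  else (∫⁻ x, g x ^ p.toReal) ^ (1 / p.toReal)

/-- The normalized (total mass 1) surface measure on the unit sphere
`S^{n-1} ⊂ ℝ^n`, viewed as a measure on `ℝ^n` supported on the sphere. -/
noncomputable def normSphere (n : ℕ) : Measure (EuclideanSpace ℝ (Fin n)) :=
  (Measure.map Subtype.val
      ((volume : Measure (EuclideanSpace ℝ (Fin n))).toSphere) Set.univ)⁻¹ •
    Measure.map Subtype.val ((volume : Measure (EuclideanSpace ℝ (Fin n))).toSphere)

/-- The multilinear spherical average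
`T(f₁,…,fₙ)(x) = ∫_{S^{n-1}} ∏_{j=1}^n f_j(x - σ_j) dσ(σ)`. -/
noncomputable def sphAvg (n : ℕ) (f : Fin n → ℝ → ℝ) (x : ℝ) : ℝ≥0∞ :=
  ∫⁻ σ, ∏ j, ENNReal.ofReal (f j (x - σ j)) ∂(normSphere n)

open Metric Set

section auxlem


lemma aux_c_pos (n : ℕ) (hn : 2 ≤ n) :
    0 < (Measure.map Subtype.val
      ((volume : Measure (EuclideanSpace ℝ (Fin n))).toSphere) Set.univ) ∧
    (Measure.map Subtype.val
      ((volume : Measure (EuclideanSpace ℝ (Fin n))).toSphere) Set.univ) < ∞ := by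
  haveI : Inhabited (Fin n) := ⟨⟨0, by omega⟩⟩
  haveI : Nontrivial (EuclideanSpace ℝ (Fin n)) := inferInstance
  rw [Measure.map_apply measurable_subtype_coe MeasurableSet.univ, Set.preimage_univ,
    Measure.toSphere_apply_univ]
  simp only [finrank_euclideanSpace, Fintype.card_fin]
  constructor
  · have h1 : (0:ℝ≥0∞) < volume (ball (0:EuclideanSpace ℝ (Fin n)) 1) :=
      measure_ball_pos _ _ one_pos
    have h2 : (0:ℝ≥0∞) < n := by
      exact_mod_cast (show 0 < n by omega)
    exact ENNReal.mul_pos h2.ne' h1.ne'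
  · exact ENNReal.mul_lt_top (ENNReal.natCast_lt_top _) measure_ball_lt_top

lemma sphAvg_ge (n : ℕ) (hn : 2 ≤ n) (R : ℝ) (x : ℝ) (hx : x ∈ Icc (-R) R) :
    1 ≤ sphAvg n (fun _ => Set.indicator (Icc (-(R+1)) (R+1)) (fun _ => (1:ℝ))) x := by
  obtain ⟨hc0, hctop⟩ := aux_c_pos n hn
  set ξ := (volume : Measure (EuclideanSpace ℝ (Fin n))).toSphere with hξ
  set c := (Measure.map Subtype.val ξ) Set.univ with hc
  have hF : Measurable (fun σ : EuclideanSpace ℝ (Fin n) =>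
      ∏ j, ENNReal.ofReal ((Icc (-(R+1)) (R+1)).indicator (fun _ => (1:ℝ)) (x - σ j))) := by
    apply Finset.measurable_prod
    intro j _
    exact ENNReal.measurable_ofReal.comp
      ((measurable_const.indicator measurableSet_Icc).comp
        (measurable_const.sub ((EuclideanSpace.proj j).continuous.measurable)))
  have key : ∀ s : sphere (0:EuclideanSpace ℝ (Fin n)) 1,
      (∏ j, ENNReal.ofReal ((Icc (-(R+1)) (R+1)).indicator (fun _ => (1:ℝ)) (x - (s:EuclideanSpace ℝ (Fin n)) j))) = 1 := by
    intro s
    have hs : ‖(s : EuclideanSpace ℝ (Fin n))‖ = 1 := mem_sphere_zero_iff_norm.mp s.2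
    have : ∀ j, (Icc (-(R+1)) (R+1)).indicator (fun _ => (1:ℝ)) (x - (s:EuclideanSpace ℝ (Fin n)) j) = 1 := by
      intro j
      have hj : |(s:EuclideanSpace ℝ (Fin n)) j| ≤ 1 := by
        have : |(s:EuclideanSpace ℝ (Fin n)) j| ≤ ‖(s:EuclideanSpace ℝ (Fin n))‖ := by
          rw [EuclideanSpace.norm_eq, ← Real.sqrt_sq_eq_abs]
          apply Real.sqrt_le_sqrt
          exact (Finset.single_le_sum (f := fun i => ‖(s:EuclideanSpace ℝ (Fin n)) i‖^2)
            (fun i _ => sq_nonneg _) (Finset.mem_univ j)).trans_eq' (by simp [sq_abs])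
        rw [hs] at this; exact this
      rw [Set.indicator_of_mem]
      rw [Set.mem_Icc] at hx ⊢
      rw [abs_le] at hj
      constructor <;> linarith [hx.1, hx.2, hj.1, hj.2]
    simp only [this, ENNReal.ofReal_one, Finset.prod_const_one]
  rw [sphAvg, normSphere, lintegral_smul_measure, ← hξ, ← hc,
    lintegral_map hF measurable_subtype_coe]
  have : ∫⁻ (s : sphere (0:EuclideanSpace ℝ (Fin n)) 1),
      (∏ j, ENNReal.ofReal ((Icc (-(R+1)) (R+1)).indicator (fun _ => (1:ℝ)) (x - (s:EuclideanSpace ℝ (Fin n)) j))) ∂ξ = c := by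
    rw [lintegral_congr key, lintegral_one, hc,
      Measure.map_apply measurable_subtype_coe MeasurableSet.univ, Set.preimage_univ]
  rw [this, smul_eq_mul, ENNReal.inv_mul_cancel hc0.ne' hctop.ne]

lemma lpNorm_mono (p : ℝ≥0∞) (g1 g2 : ℝ → ℝ≥0∞) (h : ∀ x, g1 x ≤ g2 x) :
    lpNorm p g1 ≤ lpNorm p g2 := by
  unfold _root_.lpNorm
  split
  · exact essSup_mono_ae (Filter.Eventually.of_forall h)
  · exact ENNReal.rpow_le_rpow (lintegral_mono fun x =>
      ENNReal.rpow_le_rpow (h x) ENNReal.toReal_nonneg)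
      (one_div_nonneg.mpr ENNReal.toReal_nonneg)

lemma indicator_rpow (a : ℝ) (t : ℝ) (ht : 0 < t) (x : ℝ) :
    ((Icc (-a) a).indicator (fun _ => (1:ℝ≥0∞)) x) ^ t
      = (Icc (-a) a).indicator (fun _ => (1:ℝ≥0∞)) x := by
  by_cases hx : x ∈ Icc (-a) a
  · simp [Set.indicator_of_mem hx]
  · simp [Set.indicator_of_notMem hx, ENNReal.zero_rpow_of_pos ht]

lemma lpNorm_indicator_eq (p : ℝ≥0∞) (hp : 1 ≤ p) (hpt : p ≠ ∞) (a : ℝ) :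
    lpNorm p ((Icc (-a) a).indicator (fun _ => (1:ℝ≥0∞)))
      = ENNReal.ofReal (2*a) ^ (1/p.toReal) := by
  have hpt0 : 0 < p.toReal := by
    have : (1:ℝ≥0∞).toReal ≤ p.toReal := ENNReal.toReal_mono hpt hp
    simpa using lt_of_lt_of_le one_pos this
  rw [_root_.lpNorm, if_neg hpt]
  congr 1
  rw [lintegral_congr (indicator_rpow a p.toReal hpt0),
    lintegral_indicator measurableSet_Icc, setLIntegral_one, Real.volume_Icc]
  ring_nf

lemma lpNorm_indicator_le (p : ℝ≥0∞) (hp : 1 ≤ p) (a : ℝ) (ha : 1/2 ≤ a) :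
    lpNorm p ((Icc (-a) a).indicator (fun _ => (1:ℝ≥0∞)))
      ≤ ENNReal.ofReal (2*a) ^ (1/p).toReal := by
  by_cases hpt : p = ∞
  · rw [_root_.lpNorm, if_pos hpt, hpt]
    simp only [one_div, ENNReal.inv_top, ENNReal.toReal_zero, ENNReal.rpow_zero]
    exact essSup_le_of_ae_le 1 (Filter.Eventually.of_forall fun x =>
      Set.indicator_le_self' (fun _ _ => zero_le_one) x)
  · rw [lpNorm_indicator_eq p hp hpt a, one_div, one_div, ENNReal.toReal_inv]

end auxlem

theorem necessary_condition_i (n : ℕ) (hn : 2 ≤ n) (p : Fin n → ℝ≥0∞) (r : ℝ≥0∞)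
    (hp : ∀ j, 1 ≤ p j) (hr : 1 ≤ r)
    (hT : ∃ C : ℝ, 0 < C ∧ ∀ f : Fin n → ℝ → ℝ,
      (∀ j, Measurable (f j)) → (∀ j x, 0 ≤ f j x) →
      lpNorm r (sphAvg n f) ≤ ENNReal.ofReal C *
        ∏ j, lpNorm (p j) (fun x => ENNReal.ofReal (f j x))) :
    1 / r ≤ ∑ j, 1 / p j := by
  by_cases hrt : r = ∞
  · simp [hrt]
  obtain ⟨C, hC, hbound⟩ := hT
  by_contra hcon
  push_neg at hcon
  have hr1 : 1/r ≠ ∞ := by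
    rw [one_div]
    exact (ENNReal.inv_lt_top.mpr (lt_of_lt_of_le one_pos hr)).ne
  have hsum_ne : (∑ j, 1/p j) ≠ ∞ := (hcon.trans_le le_top).ne
  set a := (1/r).toReal with haa
  set b := (∑ j, 1/p j).toReal with hbb
  have hba : b < a := (ENNReal.toReal_lt_toReal hsum_ne hr1).mpr hcon
  have ha_eq : a = 1/r.toReal := by
    rw [haa, one_div, one_div, ENNReal.toReal_inv]
  have hb_eq : b = ∑ j, (1/p j).toReal := by
    rw [hbb]
    exact ENNReal.toReal_sum fun j _ => by
      rw [one_div]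
      exact (ENNReal.inv_lt_top.mpr (lt_of_lt_of_le one_pos (hp j))).ne
  have hb0 : 0 ≤ b := ENNReal.toReal_nonneg
  have key : ∀ R : ℝ, 1 ≤ R → (2*R)^a ≤ C * (2*(R+1))^b := by
    intro R hR
    set f : Fin n → ℝ → ℝ :=
      (fun _ => Set.indicator (Icc (-(R+1)) (R+1)) (fun _ => (1:ℝ))) with hf
    have hmeas : ∀ j, Measurable (f j) := fun _ =>
      measurable_const.indicator measurableSet_Icc
    have hnn : ∀ j x, 0 ≤ f j x := fun _ x =>
      Set.indicator_nonneg (fun _ _ => zero_le_one) x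
    have h1 := hbound f hmeas hnn
    have hlow : ENNReal.ofReal (2*R) ^ (1/r.toReal) ≤ lpNorm r (sphAvg n f) := by
      rw [← lpNorm_indicator_eq r hr hrt R]
      apply lpNorm_mono
      intro x
      by_cases hx : x ∈ Icc (-R) R
      · rw [Set.indicator_of_mem hx]; exact sphAvg_ge n hn R x hx
      · rw [Set.indicator_of_notMem hx]; exact zero_le
    have hfeq : ∀ j, (fun x => ENNReal.ofReal (f j x))
        = (Icc (-(R+1)) (R+1)).indicator (fun _ => (1:ℝ≥0∞)) := by
      intro j; funext x
      show ENNReal.ofReal ((Icc (-(R+1)) (R+1)).indicator (fun _ => (1:ℝ)) x) = _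
      by_cases hx : x ∈ Icc (-(R+1)) (R+1)
      · rw [Set.indicator_of_mem hx, Set.indicator_of_mem hx, ENNReal.ofReal_one]
      · rw [Set.indicator_of_notMem hx, Set.indicator_of_notMem hx, ENNReal.ofReal_zero]
    have hup : ∀ j, lpNorm (p j) (fun x => ENNReal.ofReal (f j x))
        ≤ ENNReal.ofReal (2*(R+1)) ^ (1/p j).toReal := by
      intro j; rw [hfeq j]
      exact lpNorm_indicator_le (p j) (hp j) (R+1) (by linarith)
    have main : ENNReal.ofReal (2*R) ^ (1/r.toReal)
        ≤ ENNReal.ofReal C * ∏ j, ENNReal.ofReal (2*(R+1)) ^ (1/p j).toReal :=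
      hlow.trans (h1.trans (mul_le_mul' le_rfl
        (Finset.prod_le_prod' fun j _ => hup j)))
    have hRHS_ne : ENNReal.ofReal C * (∏ j, ENNReal.ofReal (2*(R+1)) ^ (1/p j).toReal) ≠ ∞ :=
      ENNReal.mul_ne_top ENNReal.ofReal_ne_top
        (ENNReal.prod_lt_top fun j _ =>
          ENNReal.rpow_lt_top_of_nonneg ENNReal.toReal_nonneg ENNReal.ofReal_ne_top).ne
    have hreal := ENNReal.toReal_mono hRHS_ne main
    rw [ENNReal.toReal_mul, ENNReal.toReal_prod] at hreal
    have hL : ((ENNReal.ofReal (2*R)) ^ (1/r.toReal)).toReal = (2*R)^(1/r.toReal) := by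
      rw [← ENNReal.toReal_rpow, ENNReal.toReal_ofReal (by linarith)]
    have hRj : ∀ j, ((ENNReal.ofReal (2*(R+1))) ^ ((1/p j).toReal)).toReal
        = (2*(R+1))^((1/p j).toReal) := by
      intro j
      rw [← ENNReal.toReal_rpow, ENNReal.toReal_ofReal (by linarith)]
    rw [hL, ENNReal.toReal_ofReal hC.le] at hreal
    calc (2*R)^a = (2*R)^(1/r.toReal) := by rw [ha_eq]
      _ ≤ C * ∏ j, ((ENNReal.ofReal (2*(R+1))) ^ ((1/p j).toReal)).toReal := hreal
      _ = C * ∏ j, (2*(R+1))^((1/p j).toReal) := by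
          congr 1; exact Finset.prod_congr rfl fun j _ => hRj j
      _ = C * (2*(R+1))^b := by
          rw [hb_eq, Real.rpow_sum_of_pos (by linarith) _ _]
  -- endgame
  set M := C * 4^b with hM
  have hM0 : 0 < M := mul_pos hC (Real.rpow_pos_of_pos (by norm_num) b)
  have hab : 0 < a - b := by linarith
  set R := max 1 ((M+1) ^ (a-b)⁻¹) with hRdef
  have hR1 : 1 ≤ R := le_max_left _ _
  have hRpos : 0 < R := lt_of_lt_of_le one_pos hR1
  have h2 : (2*R)^a ≤ C * (2*(R+1))^b := key R hR1
  have h3 : C * (2*(R+1))^b ≤ M * R^b := by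
    rw [hM, mul_assoc]
    apply mul_le_mul_of_nonneg_left _ hC.le
    rw [← Real.mul_rpow (by norm_num) hRpos.le]
    exact Real.rpow_le_rpow (by linarith) (by linarith) hb0
  have h4 : R^a ≤ (2*R)^a :=
    Real.rpow_le_rpow hRpos.le (by linarith) (by linarith)
  have h5 : R^a ≤ M * R^b := le_trans h4 (le_trans h2 h3)
  have h6 : R^(a-b) ≤ M := by
    have hRb : 0 < R^b := Real.rpow_pos_of_pos hRpos b
    have : R^(a-b) * R^b ≤ M * R^b := by
      rw [← Real.rpow_add hRpos]; simpa [sub_add_cancel] using h5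
    exact le_of_mul_le_mul_right this hRb
  have h7 : M + 1 ≤ R^(a-b) := by
    have : ((M+1) ^ (a-b)⁻¹)^(a-b) ≤ R^(a-b) :=
      Real.rpow_le_rpow (Real.rpow_nonneg (by linarith) _) (le_max_right _ _) hab.le
    rwa [Real.rpow_inv_rpow (by linarith) hab.ne'] at this
  linarith
end

section
/- Let n ≥ 2 be an integer and let 1 ≤ p₁,…,pₙ, r ≤ ∞. If the multilinear spherical average T is of strong type at (p₁,…,pₙ;r), then for all k, l ∈ {1,…,n} with k ≠ l one has Σ_{j=1, j∉{k,l}}^n 1/p_j + 2/p_k + 2/p_l ≤ n + 1/r. -/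
set_option maxHeartbeats 2000000

open MeasureTheory ENNReal

open Metric
open scoped Pointwise

lemma aux_asymp {q C3 d0 : ℝ} (hq : 0 < q) (hd0 : 0 < d0)
    (h : ∀ δ : ℝ, 0 < δ → δ ≤ d0 → 1 ≤ C3 * δ ^ q) : False := by
  have hC3 : 0 < C3 := by
    have := h d0 hd0 le_rfl
    nlinarith [Real.rpow_pos_of_pos hd0 q, Real.rpow_nonneg hd0.le q]
  have h1 : (0:ℝ) < 1 / (C3 + 1) := by positivity
  set δ := min d0 ((1 / (C3 + 1)) ^ (1/q)) with hδdef
  have hδpos : 0 < δ := lt_min hd0 (Real.rpow_pos_of_pos h1 _)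
  have h2 : δ ^ q ≤ ((1/(C3+1)) ^ (1/q)) ^ q :=
    Real.rpow_le_rpow hδpos.le (min_le_right _ _) hq.le
  have hq1 : 1/q*q = 1 := by field_simp
  rw [← Real.rpow_mul h1.le, hq1, Real.rpow_one] at h2
  have h3 := h δ hδpos (min_le_left _ _)
  have h4 := mul_le_mul_of_nonneg_left h2 hC3.le
  rw [mul_one_div] at h4
  have h5 : C3 / (C3+1) < 1 := by
    rw [div_lt_one (by linarith)]; linarith
  linarith

lemma lpNorm_indicator_le_s2 (p : ℝ≥0∞) (hp : 1 ≤ p) (A : Set ℝ) (hA : MeasurableSet A) :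
    lpNorm p (fun x => ENNReal.ofReal (A.indicator (fun _ => (1:ℝ)) x)) ≤
      (volume A) ^ ((p⁻¹).toReal) := by
  unfold _root_.lpNorm
  split_ifs with h
  · subst h
    simp only [ENNReal.inv_top, ENNReal.toReal_zero, ENNReal.rpow_zero]
    refine essSup_le_of_ae_le 1 (Filter.Eventually.of_forall fun x => ?_)
    by_cases hx : x ∈ A <;> simp [hx]
  · have hp0 : p ≠ 0 := by intro h0; rw [h0] at hp; simp at hp
    have ht : 0 < p.toReal := ENNReal.toReal_pos hp0 h
    have hpt : ∀ x, (ENNReal.ofReal (A.indicator (fun _ => (1:ℝ)) x)) ^ p.toReal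
        = A.indicator (fun _ => (1:ℝ≥0∞)) x := by
      intro x
      by_cases hx : x ∈ A
      · simp [hx]
      · simp [hx, ENNReal.zero_rpow_of_pos ht]
    rw [show (∫⁻ x, (ENNReal.ofReal (A.indicator (fun _ => (1:ℝ)) x)) ^ p.toReal)
        = ∫⁻ x, A.indicator (fun _ => (1:ℝ≥0∞)) x from lintegral_congr hpt,
      show (∫⁻ x, A.indicator (fun _ => (1:ℝ≥0∞)) x) = volume A from by
        rw [lintegral_indicator hA]; simp,
      ENNReal.toReal_inv, one_div]

lemma le_lpNorm (r : ℝ≥0∞) (hr : 1 ≤ r) (g : ℝ → ℝ≥0∞) (c : ℝ≥0∞) (A : Set ℝ)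
    (hA : MeasurableSet A) (hA0 : volume A ≠ 0) (hle : ∀ x ∈ A, c ≤ g x) :
    c * (volume A) ^ ((r⁻¹).toReal) ≤ lpNorm r g := by
  unfold _root_.lpNorm
  split_ifs with h
  · subst h
    simp only [ENNReal.inv_top, ENNReal.toReal_zero, ENNReal.rpow_zero, mul_one]
    by_contra hlt
    push_neg at hlt
    have h0 : volume {y | ¬ g y ≤ essSup g volume} = 0 := ae_iff.mp (ENNReal.ae_le_essSup g)
    refine hA0 (measure_mono_null (fun y hy => ?_) h0)
    exact fun hle' => absurd (lt_of_le_of_lt ((hle y hy).trans hle') hlt) (lt_irrefl _)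
  · have hr0 : r ≠ 0 := by intro h0; rw [h0] at hr; simp at hr
    have ht : 0 < r.toReal := ENNReal.toReal_pos hr0 h
    have key : c ^ r.toReal * volume A ≤ ∫⁻ x, g x ^ r.toReal := by
      rw [← lintegral_indicator_const hA (c ^ r.toReal)]
      refine lintegral_mono fun x => ?_
      by_cases hx : x ∈ A
      · simpa [hx] using ENNReal.rpow_le_rpow (hle x hx) ht.le
      · simp [hx]
    calc c * volume A ^ r⁻¹.toReal
        = (c ^ r.toReal * volume A) ^ (1 / r.toReal) := by
          rw [ENNReal.mul_rpow_of_nonneg _ _ (by positivity), ← ENNReal.rpow_mul,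
            mul_one_div_cancel ht.ne', ENNReal.rpow_one, ENNReal.toReal_inv, one_div]
      _ ≤ _ := ENNReal.rpow_le_rpow key (by positivity)

lemma core_est (N a K δ x ρ e1 e2 s w : ℝ)
    (hN : 2 ≤ N)
    (ha2 : a^2 = 1/2) (ha1 : 0.7 ≤ a) (ha8 : a ≤ 0.8)
    (hK : K = 6*N + 48)
    (hδ : 0 < δ) (hδ0 : δ ≤ 1/(100*(N+10)))
    (hx1 : -(δ/4) ≤ x) (hx2 : x ≤ δ/4)
    (hρ : 1/2 ≤ ρ) (hρ' : ρ ≤ 3/4)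
    (he1 : 0 ≤ e1) (he1' : e1 ≤ δ^2) (he2 : 0 ≤ e2) (he2' : e2 ≤ δ^2)
    (hs : 0 ≤ s) (hs' : s ≤ N * (δ/4)^2)
    (hw : 0 ≤ w) (hw2 : w^2 = (ρ*(x+a)+e1)^2 + (ρ*(x-a)+e2)^2 + s) :
    1/3 ≤ w ∧ w ≤ 9/10 ∧
    |(ρ*(x+a)+e1)/w - (x+a)| ≤ K*δ^2 ∧ |(ρ*(x-a)+e2)/w - (x-a)| ≤ K*δ^2 := by
  have hδ1 : δ ≤ 1/1200 := by
    calc δ ≤ 1/(100*(N+10)) := hδ0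
      _ ≤ 1/1200 := by apply one_div_le_one_div_of_le <;> linarith
  have hδ2pos : (0:ℝ) ≤ δ^2 := sq_nonneg δ
  have hNδpos : (0:ℝ) ≤ N * δ^2 := mul_nonneg (by linarith) hδ2pos
  have hNδ2 : N * δ^2 ≤ δ/100 := by
    have h1 : N * δ ≤ N * (1/(100*(N+10))) :=
      mul_le_mul_of_nonneg_left hδ0 (by linarith)
    have h2 : N * (1/(100*(N+10))) ≤ 1/100 := by
      rw [mul_one_div, div_le_div_iff₀ (by linarith) (by norm_num)]
      linarith
    have h3 : (N * δ) * δ ≤ (1/100) * δ := by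
      apply mul_le_mul_of_nonneg_right _ hδ.le
      linarith
    linarith
  have hsδ : s ≤ δ/100 := by
    have : N*(δ/4)^2 = (N*δ^2)/16 := by ring
    linarith
  have hδsq : δ^2 ≤ δ/1200 := by
    have := mul_le_mul_of_nonneg_left hδ1 hδ.le
    linarith
  have hxa1 : 0.69 ≤ x + a := by linarith
  have hxa2 : x + a ≤ 0.81 := by linarith
  have hxa3 : -0.81 ≤ x - a := by linarith
  have hxa4 : x - a ≤ -0.69 := by linarith
  have hρu : 0.345 ≤ ρ*(x+a) := by
    have := mul_le_mul hρ hxa1 (by norm_num) (by linarith)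
    linarith
  have hρu' : ρ*(x+a) ≤ 0.6075 := by
    have := mul_le_mul hρ' hxa2 (by linarith) (by norm_num)
    linarith
  have hρv' : ρ*(x-a) ≤ -0.345 := by
    have := mul_le_mul_of_nonpos_right hρ (show x - a ≤ 0 by linarith)
    linarith
  have hρv : -0.6075 ≤ ρ*(x-a) := by
    have := mul_le_mul_of_nonpos_right hρ' (show x - a ≤ 0 by linarith)
    linarith
  have hyk1 : 0.345 ≤ ρ*(x+a)+e1 := by linarith
  have hyk2 : ρ*(x+a)+e1 ≤ 0.61 := by linarith
  have hyl1 : -0.61 ≤ ρ*(x-a)+e2 := by linarith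
  have hyl2 : ρ*(x-a)+e2 ≤ -0.34 := by linarith
  have hw2low : 0.234 ≤ w^2 := by
    have A := mul_le_mul hyk1 hyk1 (by norm_num) (by linarith)
    have B := mul_le_mul (show (0.34:ℝ) ≤ -(ρ*(x-a)+e2) by linarith)
      (show (0.34:ℝ) ≤ -(ρ*(x-a)+e2) by linarith) (by norm_num) (by linarith)
    linarith [A, B, hs]
  have hw2up : w^2 ≤ 0.746 := by
    have A := mul_le_mul hyk2 hyk2 (by linarith) (by norm_num)
    have B := mul_le_mul (show -(ρ*(x-a)+e2) ≤ (0.61:ℝ) by linarith)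
      (show -(ρ*(x-a)+e2) ≤ (0.61:ℝ) by linarith) (by linarith) (by norm_num)
    linarith [A, B, hsδ, hδ1]
  have hwlow : 0.45 ≤ w := by
    by_contra h
    push_neg at h
    have := mul_self_lt_mul_self hw h
    linarith
  have hwup : w ≤ 0.87 := by
    by_contra h
    push_neg at h
    have := mul_self_lt_mul_self (by norm_num : (0:ℝ) ≤ 0.87) h
    linarith
  have hwpos : 0 < w := by linarith
  have hx2sq : x^2 ≤ δ^2/16 := by
    have := mul_nonneg (show (0:ℝ) ≤ δ/4 - x by linarith) (show (0:ℝ) ≤ δ/4 + x by linarith)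
    linarith
  have hid : w^2 - ρ^2 = 2*ρ^2*x^2 + 2*(ρ*((x+a)*e1) + ρ*((x-a)*e2)) + e1^2 + e2^2 + s := by
    rw [hw2]; linear_combination (2*ρ^2) * ha2
  have hue1 : (x+a)*e1 ≤ 0.81*δ^2 := by
    have := mul_le_mul hxa2 he1' he1 (by norm_num)
    linarith
  have hue1' : 0 ≤ (x+a)*e1 := mul_nonneg (by linarith) he1
  have hve2' : (x-a)*e2 ≤ 0 := by
    have := mul_le_mul_of_nonneg_right (show x - a ≤ 0 by linarith) he2
    linarith
  have hve2 : -(0.81*δ^2) ≤ (x-a)*e2 := by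
    have := mul_le_mul (show -(x-a) ≤ (0.81:ℝ) by linarith) he2' he2 (by norm_num)
    linarith
  have hρue1 : ρ*((x+a)*e1) ≤ 0.81*δ^2 := by
    have := mul_le_mul (show ρ ≤ (1:ℝ) by linarith) hue1 hue1' (by norm_num)
    linarith
  have hρue1' : 0 ≤ ρ*((x+a)*e1) := mul_nonneg (by linarith) hue1'
  have hρve2' : ρ*((x-a)*e2) ≤ 0 := by
    have := mul_le_mul_of_nonneg_left hve2' (show (0:ℝ) ≤ ρ by linarith)
    linarith
  have hρve2 : -(0.81*δ^2) ≤ ρ*((x-a)*e2) := by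
    have := mul_le_mul_of_nonpos_right (show ρ ≤ (1:ℝ) by linarith) hve2'
    linarith
  have hρsq : ρ^2 ≤ 9/16 := by
    have := mul_self_le_mul_self (show (0:ℝ) ≤ ρ by linarith) hρ'
    linarith
  have hρ2x2 : ρ^2*x^2 ≤ (9/16)*(δ^2/16) := by
    have := mul_le_mul hρsq hx2sq (sq_nonneg x) (by norm_num)
    linarith
  have hδ2le1 : δ^2 ≤ 1 := by linarith
  have hδ4 : δ^2*δ^2 ≤ δ^2 := by
    have := mul_le_mul_of_nonneg_right hδ2le1 hδ2pos
    linarith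
  have he1sq : e1^2 ≤ δ^2 := by
    have := mul_self_le_mul_self he1 he1'
    linarith
  have he2sq : e2^2 ≤ δ^2 := by
    have := mul_self_le_mul_self he2 he2'
    linarith
  have hsδ2 : s ≤ (N/16)*δ^2 := by
    have : N*(δ/4)^2 = (N/16)*δ^2 := by ring
    linarith
  have hρ2x2' : (0:ℝ) ≤ ρ^2*x^2 := mul_nonneg (sq_nonneg ρ) (sq_nonneg x)
  have he1sq' : (0:ℝ) ≤ e1^2 := sq_nonneg e1
  have he2sq' : (0:ℝ) ≤ e2^2 := sq_nonneg e2
  have hd1 : w^2 - ρ^2 ≤ (4+N)*δ^2 := by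
    rw [hid]
    linarith only [hρ2x2, hρue1, hρve2', he1sq, he2sq, hsδ2, hNδpos, hδ2pos, hρue1']
  have hd2 : -((4+N)*δ^2) ≤ w^2 - ρ^2 := by
    rw [hid]
    linarith only [hρ2x2', hρue1', hρve2, he1sq', he2sq', hs, hNδpos, hδ2pos]
  have hsq : (w-ρ)*(w+ρ) = w^2 - ρ^2 := by ring
  have hwρsum : 0.95 ≤ w + ρ := by linarith
  have hwρ1 : w - ρ ≤ (2*N+5)*δ^2 := by
    rcases le_or_gt w ρ with h | h
    · linarith
    · have h1 : (w-ρ)*0.95 ≤ (w-ρ)*(w+ρ) :=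
        mul_le_mul_of_nonneg_left hwρsum (by linarith)
      rw [hsq] at h1
      linarith
  have hwρ2 : ρ - w ≤ (2*N+5)*δ^2 := by
    rcases le_or_gt ρ w with h | h
    · linarith
    · have h1 : (ρ-w)*0.95 ≤ (ρ-w)*(w+ρ) :=
        mul_le_mul_of_nonneg_left hwρsum (by linarith)
      have h2 : (ρ-w)*(w+ρ) = -(w^2-ρ^2) := by ring
      rw [h2] at h1
      linarith
  have habs1 : |x+a| ≤ 0.81 := abs_le.mpr ⟨by linarith, hxa2⟩
  have habs2 : |x-a| ≤ 0.81 := abs_le.mpr ⟨hxa3, by linarith⟩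
  have habsd : |w-ρ| ≤ (2*N+5)*δ^2 := abs_le.mpr ⟨by linarith, hwρ1⟩
  have hpu : |(x+a)*(w-ρ)| ≤ 0.81*((2*N+5)*δ^2) := by
    rw [abs_mul]; exact mul_le_mul habs1 habsd (abs_nonneg _) (by norm_num)
  have hpv : |(x-a)*(w-ρ)| ≤ 0.81*((2*N+5)*δ^2) := by
    rw [abs_mul]; exact mul_le_mul habs2 habsd (abs_nonneg _) (by norm_num)
  obtain ⟨hpu2, hpu1⟩ := abs_le.mp hpu
  obtain ⟨hpv2, hpv1⟩ := abs_le.mp hpv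
  have hKδ : K*δ^2 = 6*(N*δ^2) + 48*δ^2 := by rw [hK]; ring
  have hK0 : (0:ℝ) ≤ K*δ^2 := by linarith
  have hKw : 0.45*(K*δ^2) ≤ w*(K*δ^2) := mul_le_mul_of_nonneg_right hwlow hK0
  refine ⟨by linarith, by linarith, ?_, ?_⟩
  · rw [abs_le]
    constructor
    · have h1 : x + a - K*δ^2 ≤ (ρ*(x+a)+e1)/w := by
        rw [le_div_iff₀ hwpos]
        linarith only [hpu1, hKw, hKδ, he1, hNδpos, hδ2pos]
      linarith
    · have h2 : (ρ*(x+a)+e1)/w ≤ x + a + K*δ^2 := by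
        rw [div_le_iff₀ hwpos]
        linarith only [hpu2, hKw, hKδ, he1', hNδpos, hδ2pos, hwup]
      linarith
  · rw [abs_le]
    constructor
    · have h1 : x - a - K*δ^2 ≤ (ρ*(x-a)+e2)/w := by
        rw [le_div_iff₀ hwpos]
        linarith only [hpv1, hKw, hKδ, he2, hNδpos, hδ2pos]
      linarith
    · have h2 : (ρ*(x-a)+e2)/w ≤ x - a + K*δ^2 := by
        rw [div_le_iff₀ hwpos]
        linarith only [hpv2, hKw, hKδ, he2', hNδpos, hδ2pos, hwup]
      linarith

/-- support intervals for the test functions -/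
noncomputable def Sint {n : ℕ} (k l : Fin n) (a K δ : ℝ) (j : Fin n) : Set ℝ :=
  if j = k then Set.Icc (-a - K*δ^2) (-a + K*δ^2)
  else if j = l then Set.Icc (a - K*δ^2) (a + K*δ^2)
  else Set.Icc (-δ) δ

lemma sqrt2_facts : ((Real.sqrt 2 / 2)^2 = 1/2) ∧ (0.7 ≤ Real.sqrt 2 / 2) ∧ (Real.sqrt 2 / 2 ≤ 0.8) := by
  have h2 : (Real.sqrt 2)^2 = 2 := Real.sq_sqrt (by norm_num)
  have hpos : 0 ≤ Real.sqrt 2 := Real.sqrt_nonneg 2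
  refine ⟨by rw [div_pow, h2]; norm_num, ?_, ?_⟩ <;> nlinarith

lemma coord_measurable (n : ℕ) (j : Fin n) :
    Measurable (fun y : EuclideanSpace ℝ (Fin n) => y j) :=
  (measurable_pi_apply j).comp ((MeasurableEquiv.toLp 2 (Fin n → ℝ)).symm).measurable

lemma sphere_lower (n : ℕ) (hn : 2 ≤ n) (k l : Fin n) (hkl : k ≠ l) :
    ∃ κ : ℝ, 0 < κ ∧ ∀ δ x : ℝ, 0 < δ → δ ≤ 1/(100*((n:ℝ)+10)) → |x| ≤ δ/4 →
      ENNReal.ofReal (κ * δ ^ n) ≤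
        normSphere n {σ : EuclideanSpace ℝ (Fin n) |
          ∀ j, x - σ j ∈ Sint k l (Real.sqrt 2 / 2) (6*(n:ℝ)+48) δ j} := by
  obtain ⟨ha2, ha1, ha8⟩ := sqrt2_facts
  set a : ℝ := Real.sqrt 2 / 2 with hadef
  set K : ℝ := 6*(n:ℝ)+48 with hKdef
  have hn2 : (2:ℝ) ≤ (n:ℝ) := by exact_mod_cast hn
  -- normalization constant
  set c : ℝ≥0∞ := Measure.map Subtype.val
    ((volume : Measure (EuclideanSpace ℝ (Fin n))).toSphere) Set.univ with hcdef
  have hc : c = (n : ℝ≥0∞) * volume (ball (0:EuclideanSpace ℝ (Fin n)) 1) := by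
    rw [hcdef, Measure.map_apply measurable_subtype_coe MeasurableSet.univ,
      Set.preimage_univ, Measure.toSphere_apply_univ, finrank_euclideanSpace_fin]
  have hballpos : volume (ball (0:EuclideanSpace ℝ (Fin n)) 1) ≠ 0 :=
    (measure_ball_pos _ _ one_pos).ne'
  have hballfin : volume (ball (0:EuclideanSpace ℝ (Fin n)) 1) ≠ ∞ :=
    measure_ball_lt_top.ne
  have hc0 : c ≠ 0 := by
    rw [hc]; exact mul_ne_zero (by exact_mod_cast (by omega : n ≠ 0)) hballpos
  have hctop : c ≠ ∞ := by
    rw [hc]; exact ENNReal.mul_ne_top (ENNReal.natCast_ne_top n) hballfin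
  have hcinvtop : c⁻¹ ≠ ∞ := ENNReal.inv_ne_top.mpr hc0
  have hcinv0 : c⁻¹ ≠ 0 := ENNReal.inv_ne_zero.mpr hctop
  set κ0 : ℝ := (c⁻¹).toReal with hκ0def
  have hκ0 : ENNReal.ofReal κ0 = c⁻¹ := ENNReal.ofReal_toReal hcinvtop
  have hκ0pos : 0 < κ0 := ENNReal.toReal_pos hcinv0 hcinvtop
  refine ⟨κ0 * (1/(32*4^n)), by positivity, ?_⟩
  intro δ x hδ hδ0 hx
  obtain ⟨hx1, hx2⟩ := abs_le.mp hx
  have hδ1 : δ ≤ 1/1200 := by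
    calc δ ≤ 1/(100*((n:ℝ)+10)) := hδ0
      _ ≤ 1/1200 := by apply one_div_le_one_div_of_le <;> linarith
  have hδ2pos : (0:ℝ) < δ^2 := by positivity
  -- the target set
  set G : Set (EuclideanSpace ℝ (Fin n)) :=
    {σ | ∀ j, x - σ j ∈ Sint k l a K δ j} with hGdef
  have hSm : ∀ j, MeasurableSet (Sint k l a K δ j) := by
    intro j; unfold Sint; split_ifs <;> exact measurableSet_Icc
  have hGm : MeasurableSet G := by
    have : G = ⋂ j, (fun σ : EuclideanSpace ℝ (Fin n) => σ j) ⁻¹'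
        {t : ℝ | x - t ∈ Sint k l a K δ j} := by
      ext σ; simp [hGdef, Set.mem_iInter]
    rw [this]
    exact MeasurableSet.iInter fun j =>
      (coord_measurable n j) ((measurable_const.sub measurable_id) (hSm j))
  -- boxes
  set M : ℕ := Nat.floor (1/(16*δ^2)) with hMdef
  set ρ : ℕ → ℝ := fun m => 1/2 + 4*δ^2*m with hρdef
  set Ibox : ℕ → Fin n → Set ℝ := fun m j =>
    if j = k then Set.Ico (ρ m * (x+a)) (ρ m * (x+a) + δ^2)
    else if j = l then Set.Ico (ρ m * (x-a)) (ρ m * (x-a) + δ^2)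
    else Set.Ico 0 (δ/4) with hIdef
  set B : ℕ → Set (EuclideanSpace ℝ (Fin n)) := fun m => {y | ∀ j, y j ∈ Ibox m j} with hBdef
  have hBpre : ∀ m, B m = ((MeasurableEquiv.toLp 2 (Fin n → ℝ)).symm) ⁻¹' (Set.univ.pi (Ibox m)) := by
    intro m; ext y; simp [hBdef, MeasurableEquiv.toLp]; rfl
  have hpim : ∀ m, MeasurableSet (Set.univ.pi (Ibox m)) := by
    intro m
    refine MeasurableSet.univ_pi fun j => ?_
    simp only [hIdef]
    split_ifs <;> exact measurableSet_Ico
  have hBm : ∀ m, MeasurableSet (B m) := by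
    intro m
    rw [hBpre m]
    exact ((MeasurableEquiv.toLp 2 (Fin n → ℝ)).symm).measurable (hpim m)
  have hρbound : ∀ m < M, 1/2 ≤ ρ m ∧ ρ m ≤ 3/4 := by
    intro m hm
    have hM_le : (M:ℝ) ≤ 1/(16*δ^2) := Nat.floor_le (by positivity)
    have hm' : (m:ℝ) ≤ (M:ℝ) := by exact_mod_cast hm.le
    have h4 : 4*δ^2*(M:ℝ) ≤ 1/4 := by
      have h := mul_le_mul_of_nonneg_left hM_le (show (0:ℝ) ≤ 4*δ^2 by positivity)
      have : 4*δ^2*(1/(16*δ^2)) = 1/4 := by field_simp; ring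
      linarith
    have h5 : 4*δ^2*(m:ℝ) ≤ 4*δ^2*(M:ℝ) :=
      mul_le_mul_of_nonneg_left hm' (by positivity)
    have h6 : 0 ≤ 4*δ^2*(m:ℝ) := by positivity
    constructor
    · simp only [hρdef]; linarith
    · simp only [hρdef]; linarith
  have hcard : ((Finset.univ.erase k).erase l).card = n - 2 := by
    rw [Finset.card_erase_of_mem (Finset.mem_erase.mpr ⟨Ne.symm hkl, Finset.mem_univ l⟩),
      Finset.card_erase_of_mem (Finset.mem_univ k), Finset.card_univ, Fintype.card_fin]
    omega
  -- core: each box maps into the cone over G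
  have hsub : (⋃ m ∈ Finset.range M, B m) ⊆
      Set.Ioo (0:ℝ) 1 • (Subtype.val '' (Subtype.val ⁻¹' G :
        Set (sphere (0:EuclideanSpace ℝ (Fin n)) 1))) := by
    intro y hy
    simp only [Set.mem_iUnion, Finset.mem_range] at hy
    obtain ⟨m, hm, hyB⟩ := hy
    obtain ⟨hρ1, hρ2⟩ := hρbound m hm
    have hyk : y k ∈ Set.Ico (ρ m * (x+a)) (ρ m * (x+a) + δ^2) := by
      have := hyB k; simpa [hIdef] using this
    have hyl : y l ∈ Set.Ico (ρ m * (x-a)) (ρ m * (x-a) + δ^2) := by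
      have := hyB l
      simp only [hIdef, if_neg (Ne.symm hkl), if_pos rfl] at this
      exact this
    have hyj : ∀ j, j ≠ k → j ≠ l → y j ∈ Set.Ico (0:ℝ) (δ/4) := by
      intro j hjk hjl
      have := hyB j
      simp only [hIdef, if_neg hjk, if_neg hjl] at this
      exact this
    set s : ℝ := ∑ j ∈ (Finset.univ.erase k).erase l, (y j)^2 with hsdef
    have hsum : ‖y‖^2 = (y k)^2 + ((y l)^2 + s) := by
      have h1 : ‖y‖^2 = ∑ j, (y j)^2 := by
        rw [EuclideanSpace.norm_eq, Real.sq_sqrt (by positivity)]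
        simp [Real.norm_eq_abs, sq_abs]
      rw [h1, ← Finset.add_sum_erase _ _ (Finset.mem_univ k),
        ← Finset.add_sum_erase _ _ (Finset.mem_erase.mpr ⟨Ne.symm hkl, Finset.mem_univ l⟩)]
    have hs0 : 0 ≤ s := Finset.sum_nonneg fun j _ => sq_nonneg _
    have hsup : s ≤ (n:ℝ) * (δ/4)^2 := by
      have hb : ∀ j ∈ (Finset.univ.erase k).erase l, (y j)^2 ≤ (δ/4)^2 := by
        intro j hj
        obtain ⟨hjl, hjk'⟩ := Finset.mem_erase.mp hj
        obtain ⟨hjk, _⟩ := Finset.mem_erase.mp hjk'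
        obtain ⟨h0, h1⟩ := hyj j hjk hjl
        nlinarith
      calc s ≤ ((Finset.univ.erase k).erase l).card • (δ/4)^2 :=
            Finset.sum_le_card_nsmul _ _ _ hb
        _ = (((n:ℕ) - 2 : ℕ):ℝ) * (δ/4)^2 := by rw [hcard, nsmul_eq_mul]
        _ ≤ (n:ℝ) * (δ/4)^2 := by
            apply mul_le_mul_of_nonneg_right _ (by positivity)
            exact_mod_cast Nat.sub_le n 2
    have hw2 : ‖y‖^2 = (ρ m*(x+a) + (y k - ρ m*(x+a)))^2
        + (ρ m*(x-a) + (y l - ρ m*(x-a)))^2 + s := by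
      rw [hsum]; ring
    obtain ⟨h13, h910, hk_est, hl_est⟩ := core_est (n:ℝ) a K δ x (ρ m)
      (y k - ρ m*(x+a)) (y l - ρ m*(x-a)) s ‖y‖ hn2 ha2 ha1 ha8 hKdef hδ hδ0
      (by linarith) hx2 hρ1 hρ2 (by linarith [hyk.1]) (by linarith [hyk.2])
      (by linarith [hyl.1]) (by linarith [hyl.2]) hs0 hsup (norm_nonneg y) hw2
    have hk_est' : |y k / ‖y‖ - (x+a)| ≤ K*δ^2 := by
      have : ρ m*(x+a) + (y k - ρ m*(x+a)) = y k := by ring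
      rwa [this] at hk_est
    have hl_est' : |y l / ‖y‖ - (x-a)| ≤ K*δ^2 := by
      have : ρ m*(x-a) + (y l - ρ m*(x-a)) = y l := by ring
      rwa [this] at hl_est
    have hwpos : 0 < ‖y‖ := by linarith
    have hz_sphere : (‖y‖⁻¹ • y) ∈ sphere (0:EuclideanSpace ℝ (Fin n)) 1 := by
      rw [mem_sphere_zero_iff_norm, norm_smul, norm_inv, norm_norm]
      field_simp
    have hzG : (‖y‖⁻¹ • y) ∈ G := by
      intro j
      have hcoordeq : (‖y‖⁻¹ • y) j = y j / ‖y‖ := by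
        show ‖y‖⁻¹ * y j = y j / ‖y‖; rw [inv_mul_eq_div]
      by_cases hjk : j = k
      · subst hjk
        simp only [Sint, if_pos rfl, Set.mem_Icc, hcoordeq]
        obtain ⟨e1, e2⟩ := abs_le.mp hk_est'
        constructor <;> linarith
      · by_cases hjl : j = l
        · subst hjl
          simp only [Sint, if_neg hjk, if_pos rfl, Set.mem_Icc, hcoordeq]
          obtain ⟨e1, e2⟩ := abs_le.mp hl_est'
          constructor <;> linarith
        · simp only [Sint, if_neg hjk, if_neg hjl, Set.mem_Icc, hcoordeq]
          obtain ⟨h0, h1⟩ := hyj j hjk hjl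
          have hd1 : 0 ≤ y j / ‖y‖ := div_nonneg h0 hwpos.le
          have hd2 : y j / ‖y‖ ≤ 3*(δ/4) := by
            rw [div_le_iff₀ hwpos]
            have := mul_le_mul_of_nonneg_left h13 (show (0:ℝ) ≤ 3*(δ/4) by positivity)
            linarith
          constructor <;> linarith
    refine Set.mem_smul.mpr ⟨‖y‖, ?_, ‖y‖⁻¹ • y, ?_, ?_⟩
    · exact ⟨hwpos, by linarith⟩
    · exact ⟨⟨‖y‖⁻¹ • y, hz_sphere⟩, hzG, rfl⟩
    · exact smul_inv_smul₀ hwpos.ne' y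
  -- volume of each box
  have hboxvol : ∀ m, volume (B m) = ENNReal.ofReal (δ^2*(δ^2*(δ/4)^(n-2))) := by
    intro m
    rw [hBpre m,
      (EuclideanSpace.volume_preserving_symm_measurableEquiv_toLp (Fin n)).measure_preimage
        (hpim m).nullMeasurableSet,
      volume_pi_pi]
    rw [← Finset.mul_prod_erase _ _ (Finset.mem_univ k),
      ← Finset.mul_prod_erase _ _ (Finset.mem_erase.mpr ⟨Ne.symm hkl, Finset.mem_univ l⟩)]
    have h1 : volume (Ibox m k) = ENNReal.ofReal (δ^2) := by
      simp only [hIdef, if_pos rfl, Real.volume_Ico, add_sub_cancel_left]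
    have h2 : volume (Ibox m l) = ENNReal.ofReal (δ^2) := by
      simp only [hIdef, if_neg (Ne.symm hkl), eq_self_iff_true, if_true, Real.volume_Ico,
        add_sub_cancel_left]
    have h3 : ∏ j ∈ (Finset.univ.erase k).erase l, volume (Ibox m j)
        = (ENNReal.ofReal (δ/4))^(n-2) := by
      have he : ∀ j ∈ (Finset.univ.erase k).erase l,
          volume (Ibox m j) = ENNReal.ofReal (δ/4) := by
        intro j hj
        obtain ⟨hjl, hjk'⟩ := Finset.mem_erase.mp hj
        obtain ⟨hjk, _⟩ := Finset.mem_erase.mp hjk'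
        simp only [hIdef, if_neg hjk, if_neg hjl, Real.volume_Ico, sub_zero]
      rw [Finset.prod_congr rfl he, Finset.prod_const, hcard]
    rw [h1, h2, h3, ← ENNReal.ofReal_pow (by positivity), ← ENNReal.ofReal_mul (by positivity),
      ← ENNReal.ofReal_mul (by positivity)]
  -- disjointness
  have hdisj : (↑(Finset.range M) : Set ℕ).PairwiseDisjoint B := by
    have key : ∀ m m' : ℕ, m < m' → Disjoint (B m) (B m') := by
      intro m m' hmm'
      rw [Set.disjoint_left]
      intro y hym hym'
      have h1 : y l ∈ Set.Ico (ρ m * (x-a)) (ρ m * (x-a) + δ^2) := by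
        have := hym l; simp only [hIdef, hBdef, if_neg (Ne.symm hkl), if_pos rfl] at this
        exact this
      have h2 : y l ∈ Set.Ico (ρ m' * (x-a)) (ρ m' * (x-a) + δ^2) := by
        have := hym' l; simp only [hIdef, hBdef, if_neg (Ne.symm hkl), if_pos rfl] at this
        exact this
      have hρd : ρ m' - ρ m ≥ 4*δ^2 := by
        have : (m:ℝ) + 1 ≤ (m':ℝ) := by exact_mod_cast hmm'
        simp only [hρdef]
        nlinarith
      have hxa : x - a ≤ -(1/2) := by linarith
      have hprod : (ρ m' - ρ m) * (x-a) ≤ 4*δ^2*(x-a) := by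
        apply mul_le_mul_of_nonpos_right hρd (by linarith)
      have hprod2 : 4*δ^2*(x-a) ≤ 4*δ^2*(-(1/2)) :=
        mul_le_mul_of_nonneg_left hxa (by positivity)
      have : ρ m' * (x-a) + δ^2 ≤ ρ m * (x-a) := by nlinarith
      obtain ⟨ha1', hb1⟩ := h1
      obtain ⟨ha2', hb2⟩ := h2
      linarith
    intro m hm m' hm' hne
    rcases hne.lt_or_gt with h | h
    · exact key m m' h
    · exact (key m' m h).symm
  -- union volume
  have hMlow : 1/(32*δ^2) ≤ (M:ℝ) := by
    have ht2 : (2:ℝ) ≤ 1/(16*δ^2) := by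
      rw [le_div_iff₀ (by positivity)]
      nlinarith
    have := Nat.sub_one_lt_floor (1/(16*δ^2))
    have heq : 1/(16*δ^2)/2 = 1/(32*δ^2) := by ring
    simp only [hMdef]
    linarith
  have hUvol : ENNReal.ofReal ((1/(32*4^n))*δ^n) ≤ volume (⋃ m ∈ Finset.range M, B m) := by
    rw [measure_biUnion_finset hdisj fun m _ => hBm m]
    rw [Finset.sum_congr rfl (fun m _ => hboxvol m), Finset.sum_const, Finset.card_range,
      nsmul_eq_mul, ← ENNReal.ofReal_natCast, ← ENNReal.ofReal_mul (by positivity)]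
    apply ENNReal.ofReal_le_ofReal
    have hbv : 0 ≤ δ^2*(δ^2*(δ/4)^(n-2)) := by positivity
    have h1 : 1/(32*δ^2) * (δ^2*(δ^2*(δ/4)^(n-2))) ≤ (M:ℝ) * (δ^2*(δ^2*(δ/4)^(n-2))) :=
      mul_le_mul_of_nonneg_right hMlow hbv
    have hpow : δ^(n-2)*δ^2 = δ^n := by
      rw [← pow_add]; congr 1; omega
    have h2 : 1/(32*δ^2) * (δ^2*(δ^2*(δ/4)^(n-2))) = δ^n/(32*4^(n-2)) := by
      rw [div_pow, ← hpow]
      field_simp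
    have h3 : (1/(32*4^n))*δ^n ≤ δ^n/(32*4^(n-2)) := by
      rw [one_div_mul_eq_div]
      apply div_le_div_of_nonneg_left (by positivity) (by positivity)
      have : (4:ℝ)^(n-2) ≤ 4^n := pow_le_pow_right₀ (by norm_num) (by omega)
      linarith
    linarith
  -- assemble
  have hGsub : normSphere n G = c⁻¹ * Measure.map Subtype.val
      ((volume : Measure (EuclideanSpace ℝ (Fin n))).toSphere) G := by
    rw [normSphere, Measure.smul_apply, smul_eq_mul, hcdef]
  rw [hGsub, Measure.map_apply measurable_subtype_coe hGm,
    Measure.toSphere_apply' _ (measurable_subtype_coe hGm), finrank_euclideanSpace_fin]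
  calc ENNReal.ofReal (κ0 * (1/(32*4^n)) * δ^n)
      = ENNReal.ofReal κ0 * ENNReal.ofReal ((1/(32*4^n))*δ^n) := by
        rw [← ENNReal.ofReal_mul (by positivity), mul_assoc]
    _ ≤ c⁻¹ * volume (⋃ m ∈ Finset.range M, B m) := by
        rw [hκ0]
        exact mul_le_mul' le_rfl hUvol
    _ ≤ c⁻¹ * ((n:ℝ≥0∞) * volume (Set.Ioo (0:ℝ) 1 • (Subtype.val ''
        (Subtype.val ⁻¹' G : Set (sphere (0:EuclideanSpace ℝ (Fin n)) 1))))) := by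
        apply mul_le_mul' le_rfl
        calc volume (⋃ m ∈ Finset.range M, B m)
            ≤ volume (Set.Ioo (0:ℝ) 1 • (Subtype.val ''
              (Subtype.val ⁻¹' G : Set (sphere (0:EuclideanSpace ℝ (Fin n)) 1)))) :=
              measure_mono hsub
          _ ≤ _ := le_mul_of_one_le_left (zero_le) (by
              exact_mod_cast Nat.one_le_cast.mpr (by omega))

theorem necessary_condition_iii (n : ℕ) (hn : 2 ≤ n) (p : Fin n → ℝ≥0∞) (r : ℝ≥0∞)
    (hp : ∀ j, 1 ≤ p j) (hr : 1 ≤ r)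
    (hT : ∃ C : ℝ, 0 < C ∧ ∀ f : Fin n → ℝ → ℝ,
      (∀ j, Measurable (f j)) → (∀ j x, 0 ≤ f j x) →
      lpNorm r (sphAvg n f) ≤ ENNReal.ofReal C *
        ∏ j, lpNorm (p j) (fun x => ENNReal.ofReal (f j x))) :
    ∀ k l : Fin n, k ≠ l →
      (∑ j ∈ (Finset.univ.erase k).erase l, 1 / p j) + 2 / p k + 2 / p l ≤
        (n : ℝ≥0∞) + 1 / r := by
  obtain ⟨C, hC, hT⟩ := hT
  intro k l hkl
  by_contra hcon
  push_neg at hcon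
  obtain ⟨κ, hκ, hlow⟩ := sphere_lower n hn k l hkl
  set a : ℝ := Real.sqrt 2 / 2 with hadef
  set K : ℝ := 6*(n:ℝ)+48 with hKdef
  have hK1 : (1:ℝ) ≤ 2*K := by
    have : (0:ℝ) ≤ (n:ℝ) := Nat.cast_nonneg n
    simp only [hKdef]; linarith
  set rest : Finset (Fin n) := (Finset.univ.erase k).erase l with hrest
  have hlmem : l ∈ Finset.univ.erase k := Finset.mem_erase.mpr ⟨Ne.symm hkl, Finset.mem_univ l⟩
  -- exponents
  set sE : Fin n → ℝ := fun j => ((p j)⁻¹).toReal with hsEdef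
  set ρr : ℝ := (r⁻¹).toReal with hρrdef
  have hinvle : ∀ j, (p j)⁻¹ ≤ 1 := fun j => ENNReal.inv_le_one.mpr (hp j)
  have hrinvle : r⁻¹ ≤ 1 := ENNReal.inv_le_one.mpr hr
  have hsE1 : ∀ j, sE j ≤ 1 := by
    intro j
    calc sE j ≤ (1:ℝ≥0∞).toReal := ENNReal.toReal_mono (by norm_num) (hinvle j)
      _ = 1 := by simp
  have hsE0 : ∀ j, 0 ≤ sE j := fun j => ENNReal.toReal_nonneg
  have hρr1 : ρr ≤ 1 := by
    calc ρr ≤ (1:ℝ≥0∞).toReal := ENNReal.toReal_mono (by norm_num) hrinvle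
      _ = 1 := by simp
  have hρr0 : 0 ≤ ρr := ENNReal.toReal_nonneg
  -- the strict inequality in real form
  have hE : (n:ℝ) + ρr < (∑ j ∈ rest, sE j) + 2*sE k + 2*sE l := by
    have h1 : ((n : ℝ≥0∞) + 1/r) ≠ ⊤ :=
      ENNReal.add_ne_top.mpr ⟨ENNReal.natCast_ne_top n,
        by rw [one_div]; exact (lt_of_le_of_lt hrinvle (by norm_num)).ne⟩
    have h2 : (∑ j ∈ rest, 1/p j) + 2/p k + 2/p l ≠ ⊤ := by
      refine ENNReal.add_ne_top.mpr ⟨ENNReal.add_ne_top.mpr ⟨?_, ?_⟩, ?_⟩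
      · refine (ENNReal.sum_lt_top.mpr fun j _ => ?_).ne
        rw [one_div]; exact lt_of_le_of_lt (hinvle j) (by norm_num)
      · rw [div_eq_mul_inv]
        exact ENNReal.mul_ne_top (by norm_num) (lt_of_le_of_lt (hinvle k) (by norm_num)).ne
      · rw [div_eq_mul_inv]
        exact ENNReal.mul_ne_top (by norm_num) (lt_of_le_of_lt (hinvle l) (by norm_num)).ne
    have h3 := (ENNReal.toReal_lt_toReal h1 h2).mpr hcon
    have e1 : ((n : ℝ≥0∞) + 1/r).toReal = (n:ℝ) + ρr := by
      rw [ENNReal.toReal_add (ENNReal.natCast_ne_top n)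
          (by rw [one_div]; exact (lt_of_le_of_lt hrinvle (by norm_num)).ne),
        one_div, hρrdef]
      simp
    have e2 : ((∑ j ∈ rest, 1/p j) + 2/p k + 2/p l).toReal
        = (∑ j ∈ rest, sE j) + 2*sE k + 2*sE l := by
      rw [ENNReal.toReal_add, ENNReal.toReal_add, ENNReal.toReal_sum]
      · congr 1
        · congr 1
          · exact Finset.sum_congr rfl fun j _ => by
              rw [one_div, hsEdef]
          · simp only [hsEdef]
            rw [ENNReal.toReal_div, ENNReal.toReal_inv, div_eq_mul_inv]
            norm_num
        · simp only [hsEdef]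
          rw [ENNReal.toReal_div, ENNReal.toReal_inv, div_eq_mul_inv]
          norm_num
      · intro j _
        rw [one_div]; exact (lt_of_le_of_lt (hinvle j) (by norm_num)).ne
      · refine (ENNReal.sum_lt_top.mpr fun j _ => ?_).ne
        rw [one_div]; exact lt_of_le_of_lt (hinvle j) (by norm_num)
      · rw [div_eq_mul_inv]
        exact ENNReal.mul_ne_top (by norm_num) (lt_of_le_of_lt (hinvle k) (by norm_num)).ne
      · refine ENNReal.add_ne_top.mpr ⟨?_, ?_⟩
        · refine (ENNReal.sum_lt_top.mpr fun j _ => ?_).ne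
          rw [one_div]; exact lt_of_le_of_lt (hinvle j) (by norm_num)
        · rw [div_eq_mul_inv]
          exact ENNReal.mul_ne_top (by norm_num) (lt_of_le_of_lt (hinvle k) (by norm_num)).ne
      · rw [div_eq_mul_inv]
        exact ENNReal.mul_ne_top (by norm_num) (lt_of_le_of_lt (hinvle l) (by norm_num)).ne
    rw [e1, e2] at h3
    exact h3
  set Ssum : ℝ := ∑ j ∈ rest, sE j with hSsum
  set q : ℝ := Ssum + 2*sE k + 2*sE l - ((n:ℝ) + ρr) with hqdef
  have hq : 0 < q := by simp only [hqdef]; linarith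
  set d0 : ℝ := 1/(100*((n:ℝ)+10)) with hd0def
  have hd0 : 0 < d0 := by positivity
  set C3 : ℝ := C * ((2*K)*(2*K)*2^n) * 2 / κ with hC3def
  refine aux_asymp (C3 := C3) hq hd0 ?_
  intro δ hδ hδd0
  have hδ1 : δ ≤ 1/1200 := by
    have hn0 : (2:ℝ) ≤ (n:ℝ) := by exact_mod_cast hn
    calc δ ≤ d0 := hδd0
      _ ≤ 1/1200 := by
        simp only [hd0def]
        apply one_div_le_one_div_of_le <;> linarith
  -- test functions
  set f : Fin n → ℝ → ℝ := fun j => (Sint k l a K δ j).indicator (fun _ => (1:ℝ)) with hfdef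
  have hSm : ∀ j, MeasurableSet (Sint k l a K δ j) := by
    intro j; unfold Sint; split_ifs <;> exact measurableSet_Icc
  have hfm : ∀ j, Measurable (f j) := fun j => measurable_const.indicator (hSm j)
  have hf0 : ∀ j x, 0 ≤ f j x := by
    intro j x
    exact Set.indicator_nonneg (fun _ _ => zero_le_one) x
  have key := hT f hfm hf0
  -- measurability of the level sets
  have hcoord : ∀ j : Fin n, Measurable (fun y : EuclideanSpace ℝ (Fin n) => y j) :=
    fun j => (measurable_pi_apply j).comp ((MeasurableEquiv.toLp 2 (Fin n → ℝ)).symm).measurable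
  have hGm : ∀ x' : ℝ, MeasurableSet
      {σ : EuclideanSpace ℝ (Fin n) | ∀ j, x' - σ j ∈ Sint k l a K δ j} := by
    intro x'
    have : {σ : EuclideanSpace ℝ (Fin n) | ∀ j, x' - σ j ∈ Sint k l a K δ j}
        = ⋂ j, (fun σ : EuclideanSpace ℝ (Fin n) => σ j) ⁻¹'
          {t : ℝ | x' - t ∈ Sint k l a K δ j} := by
      ext σ; simp [Set.mem_iInter]
    rw [this]
    exact MeasurableSet.iInter fun j =>
      (hcoord j) ((measurable_const.sub measurable_id) (hSm j))
  -- pointwise lower bound for sphAvg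
  have hptwise : ∀ x' ∈ Set.Icc (-(δ/4)) (δ/4), ENNReal.ofReal (κ*δ^n) ≤ sphAvg n f x' := by
    intro x' hx'
    have habs : |x'| ≤ δ/4 := abs_le.mpr ⟨hx'.1, hx'.2⟩
    refine le_trans (hlow δ x' hδ hδd0 habs) ?_
    rw [sphAvg]
    have hpt : ∀ σ : EuclideanSpace ℝ (Fin n),
        ({σ' : EuclideanSpace ℝ (Fin n) | ∀ j, x' - σ' j ∈ Sint k l a K δ j}).indicator
          (fun _ => (1:ℝ≥0∞)) σ ≤ ∏ j, ENNReal.ofReal (f j (x' - σ j)) := by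
      intro σ
      by_cases hσ : σ ∈ {σ' : EuclideanSpace ℝ (Fin n) | ∀ j, x' - σ' j ∈ Sint k l a K δ j}
      · rw [Set.indicator_of_mem hσ]
        have heq : ∀ j : Fin n, ENNReal.ofReal (f j (x' - σ j)) = 1 := by
          intro j
          simp only [hfdef]
          rw [Set.indicator_of_mem (hσ j)]
          exact ENNReal.ofReal_one
        rw [Finset.prod_congr rfl (fun j _ => heq j), Finset.prod_const_one]
      · rw [Set.indicator_of_notMem hσ]
        exact zero_le
    calc normSphere n {σ : EuclideanSpace ℝ (Fin n) | ∀ j, x' - σ j ∈ Sint k l a K δ j}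
        = ∫⁻ σ, ({σ' : EuclideanSpace ℝ (Fin n) | ∀ j, x' - σ' j ∈ Sint k l a K δ j}).indicator
            (fun _ => (1:ℝ≥0∞)) σ ∂(normSphere n) := by
          rw [lintegral_indicator_const (hGm x') 1, one_mul]
      _ ≤ _ := lintegral_mono hpt
  have hvolIcc : volume (Set.Icc (-(δ/4)) (δ/4)) = ENNReal.ofReal (δ/2) := by
    rw [Real.volume_Icc]; congr 1; ring
  have hvolIcc0 : volume (Set.Icc (-(δ/4)) (δ/4)) ≠ 0 := by
    rw [hvolIcc]
    simp only [ne_eq, ENNReal.ofReal_eq_zero, not_le]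
    linarith
  have hLHS := le_lpNorm r hr (sphAvg n f) (ENNReal.ofReal (κ*δ^n)) _
    measurableSet_Icc hvolIcc0 hptwise
  -- upper bounds
  have hup : ∀ j, lpNorm (p j) (fun x => ENNReal.ofReal (f j x)) ≤
      (volume (Sint k l a K δ j))^(((p j)⁻¹).toReal) := by
    intro j
    simp only [hfdef]
    exact lpNorm_indicator_le_s2 (p j) (hp j) _ (hSm j)
  set w : Fin n → ℝ := fun j => if j = k then 2*(K*δ^2) else if j = l then 2*(K*δ^2) else 2*δ
    with hwdef
  have hKpos : (0:ℝ) < K := by linarith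
  have hwpos : ∀ j, 0 < w j := by
    intro j; simp only [hwdef]; split_ifs <;> positivity
  have hvolS : ∀ j, volume (Sint k l a K δ j) = ENNReal.ofReal (w j) := by
    intro j
    simp only [Sint, hwdef]
    split_ifs <;> rw [Real.volume_Icc] <;> congr 1 <;> ring
  -- main ENNReal inequality
  have main : ENNReal.ofReal (κ*δ^n) * (ENNReal.ofReal (δ/2))^ρr ≤
      ENNReal.ofReal C * ∏ j, (ENNReal.ofReal (w j))^(sE j) := by
    calc ENNReal.ofReal (κ*δ^n) * (ENNReal.ofReal (δ/2))^ρr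
        = ENNReal.ofReal (κ*δ^n) * (volume (Set.Icc (-(δ/4)) (δ/4)))^ρr := by rw [hvolIcc]
      _ ≤ lpNorm r (sphAvg n f) := by
          have : ρr = (r⁻¹).toReal := hρrdef
          rw [this]; exact hLHS
      _ ≤ ENNReal.ofReal C * ∏ j, lpNorm (p j) (fun x => ENNReal.ofReal (f j x)) := key
      _ ≤ ENNReal.ofReal C * ∏ j, (ENNReal.ofReal (w j))^(sE j) := by
          apply mul_le_mul' le_rfl
          apply Finset.prod_le_prod'
          intro j _
          calc lpNorm (p j) (fun x => ENNReal.ofReal (f j x))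
              ≤ (volume (Sint k l a K δ j))^(((p j)⁻¹).toReal) := hup j
            _ = (ENNReal.ofReal (w j))^(sE j) := by rw [hvolS j, hsEdef]
  -- convert to a real inequality
  have hreal : κ*δ^n * (δ/2)^ρr ≤ C * ∏ j, (w j)^(sE j) := by
    have lhs_eq : ENNReal.ofReal (κ*δ^n) * (ENNReal.ofReal (δ/2))^ρr
        = ENNReal.ofReal (κ*δ^n * (δ/2)^ρr) := by
      rw [ENNReal.ofReal_rpow_of_pos (by positivity), ← ENNReal.ofReal_mul (by positivity)]
    have rhs_eq : ENNReal.ofReal C * ∏ j, (ENNReal.ofReal (w j))^(sE j)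
        = ENNReal.ofReal (C * ∏ j, (w j)^(sE j)) := by
      have h1 : ∀ j : Fin n, (ENNReal.ofReal (w j))^(sE j) = ENNReal.ofReal ((w j)^(sE j)) :=
        fun j => ENNReal.ofReal_rpow_of_pos (hwpos j)
      rw [Finset.prod_congr rfl (fun j _ => h1 j),
        ← ENNReal.ofReal_prod_of_nonneg (fun j _ => Real.rpow_nonneg (hwpos j).le _),
        ← ENNReal.ofReal_mul hC.le]
    rw [lhs_eq, rhs_eq] at main
    have hprodpos : 0 ≤ C * ∏ j, (w j)^(sE j) := by
      apply mul_nonneg hC.le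
      exact Finset.prod_nonneg fun j _ => Real.rpow_nonneg (hwpos j).le _
    exact (ENNReal.ofReal_le_ofReal_iff hprodpos).mp main
  -- split the product
  have hsplit : ∏ j, (w j)^(sE j)
      = (2*(K*δ^2))^(sE k) * ((2*(K*δ^2))^(sE l) * ∏ j ∈ rest, (2*δ)^(sE j)) := by
    rw [← Finset.mul_prod_erase _ _ (Finset.mem_univ k),
      ← Finset.mul_prod_erase _ _ hlmem]
    have e1 : w k = 2*(K*δ^2) := by simp [hwdef]
    have e2 : w l = 2*(K*δ^2) := by simp [hwdef, Ne.symm hkl]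
    rw [e1, e2]
    congr 1
    congr 1
    apply Finset.prod_congr rfl
    intro j hj
    obtain ⟨hjl, hjk'⟩ := Finset.mem_erase.mp hj
    obtain ⟨hjk, _⟩ := Finset.mem_erase.mp hjk'
    simp [hwdef, hjk, hjl]
  -- bound the pieces
  have hKfac : ∀ j : Fin n, (2*(K*δ^2))^(sE j) ≤ (2*K) * δ^(2*sE j) := by
    intro j
    rw [show 2*(K*δ^2) = (2*K)*(δ^2) by ring, Real.mul_rpow (by positivity) (by positivity)]
    have h1 : (2*K)^(sE j) ≤ 2*K := by
      calc (2*K)^(sE j) ≤ (2*K)^(1:ℝ) := Real.rpow_le_rpow_of_exponent_le hK1 (hsE1 j)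
        _ = 2*K := Real.rpow_one _
    have h2 : ((δ^2 : ℝ))^(sE j) = δ^(2*sE j) := by
      rw [← Real.rpow_natCast δ 2, ← Real.rpow_mul hδ.le]
      norm_num
    rw [h2]
    exact mul_le_mul_of_nonneg_right h1 (Real.rpow_nonneg hδ.le _)
  have hrestb : ∏ j ∈ rest, (2*δ)^(sE j) ≤ 2^n * δ^Ssum := by
    have h1 : ∀ j ∈ rest, (2*δ)^(sE j) ≤ 2 * δ^(sE j) := by
      intro j _
      rw [Real.mul_rpow (by norm_num) hδ.le]
      apply mul_le_mul_of_nonneg_right _ (Real.rpow_nonneg hδ.le _)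
      calc (2:ℝ)^(sE j) ≤ (2:ℝ)^(1:ℝ) :=
            Real.rpow_le_rpow_of_exponent_le (by norm_num) (hsE1 j)
        _ = 2 := Real.rpow_one 2
    calc ∏ j ∈ rest, (2*δ)^(sE j) ≤ ∏ j ∈ rest, (2 * δ^(sE j)) :=
          Finset.prod_le_prod (fun j _ => Real.rpow_nonneg (by positivity) _) h1
      _ = 2^rest.card * ∏ j ∈ rest, δ^(sE j) := by
          rw [Finset.prod_mul_distrib, Finset.prod_const]
      _ = 2^rest.card * δ^Ssum := by
          rw [hSsum, Real.rpow_sum_of_pos hδ]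
      _ ≤ 2^n * δ^Ssum := by
          apply mul_le_mul_of_nonneg_right _ (Real.rpow_nonneg hδ.le _)
          apply pow_le_pow_right₀ (by norm_num)
          exact Finset.card_le_univ rest |>.trans (by simp)
  -- lower bound for the left side
  have hlhs_low : (κ/2) * δ^((n:ℝ)+ρr) ≤ κ*δ^n * (δ/2)^ρr := by
    have h1 : (δ/2)^ρr = δ^ρr / 2^ρr := Real.div_rpow hδ.le (by norm_num) ρr
    have h2 : (2:ℝ)^ρr ≤ 2 := by
      calc (2:ℝ)^ρr ≤ (2:ℝ)^(1:ℝ) := Real.rpow_le_rpow_of_exponent_le (by norm_num) hρr1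
        _ = 2 := Real.rpow_one 2
    have h2pos : (0:ℝ) < 2^ρr := Real.rpow_pos_of_pos (by norm_num) ρr
    have h3 : δ^((n:ℝ)+ρr) = δ^(n:ℕ) * δ^ρr := by
      rw [Real.rpow_add hδ, Real.rpow_natCast]
    have hA : (0:ℝ) ≤ κ * δ^(n:ℕ) * δ^ρr := by positivity
    rw [h1, h3, show κ*δ^(n:ℕ)*(δ^ρr/2^ρr) = (κ*δ^(n:ℕ)*δ^ρr)/2^ρr by ring,
      show (κ/2) * (δ^(n:ℕ)*δ^ρr) = (κ*δ^(n:ℕ)*δ^ρr)/2 by ring]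
    exact div_le_div_of_nonneg_left hA h2pos h2
  -- upper bound for the product
  have hP : ∏ j, (w j)^(sE j)
      ≤ (2*K)*((2*K)*(2^n)) * δ^(2*sE k + (2*sE l + Ssum)) := by
    rw [hsplit]
    have hnn1 : (0:ℝ) ≤ ∏ j ∈ rest, (2*δ)^(sE j) :=
      Finset.prod_nonneg fun j _ => Real.rpow_nonneg (by positivity) _
    calc (2*(K*δ^2))^(sE k) * ((2*(K*δ^2))^(sE l) * ∏ j ∈ rest, (2*δ)^(sE j))
        ≤ ((2*K)*δ^(2*sE k)) * (((2*K)*δ^(2*sE l)) * (2^n * δ^Ssum)) := by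
          apply mul_le_mul (hKfac k) _ _ (by positivity)
          · exact mul_le_mul (hKfac l) hrestb hnn1 (by positivity)
          · exact mul_nonneg (Real.rpow_nonneg (by positivity) _) hnn1
      _ = (2*K)*((2*K)*(2^n)) * (δ^(2*sE k) * (δ^(2*sE l) * δ^Ssum)) := by ring
      _ = (2*K)*((2*K)*(2^n)) * δ^(2*sE k + (2*sE l + Ssum)) := by
          rw [← Real.rpow_add hδ, ← Real.rpow_add hδ]
  -- combine everything
  have hEq : 2*sE k + (2*sE l + Ssum) = ((n:ℝ)+ρr) + q := by
    rw [hqdef]; ring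
  have hXpos : (0:ℝ) < δ^((n:ℝ)+ρr) := Real.rpow_pos_of_pos hδ _
  have hchain : (κ/2) * δ^((n:ℝ)+ρr)
      ≤ (C*((2*K)*((2*K)*(2^n)))*δ^q) * δ^((n:ℝ)+ρr) := by
    calc (κ/2) * δ^((n:ℝ)+ρr) ≤ κ*δ^n * (δ/2)^ρr := hlhs_low
      _ ≤ C * ∏ j, (w j)^(sE j) := hreal
      _ ≤ C * ((2*K)*((2*K)*(2^n)) * δ^(2*sE k + (2*sE l + Ssum))) :=
          mul_le_mul_of_nonneg_left hP hC.le
      _ = (C*((2*K)*((2*K)*(2^n)))*δ^q) * δ^((n:ℝ)+ρr) := by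
          rw [hEq, add_comm ((n:ℝ)+ρr) q, Real.rpow_add hδ]
          ring
  have hfin : κ/2 ≤ C*((2*K)*((2*K)*(2^n)))*δ^q :=
    le_of_mul_le_mul_right hchain hXpos
  rw [hC3def, div_mul_eq_mul_div, le_div_iff₀ hκ, one_mul]
  calc κ = 2*(κ/2) := by ring
    _ ≤ 2*(C*((2*K)*((2*K)*(2^n)))*δ^q) := mul_le_mul_of_nonneg_left hfin (by norm_num)
    _ = C * (2*K*(2*K)*2^n) * 2 * δ^q := by ring
end

section
/- For every q with 2 < q < ∞ there exists a finite constant C = C(q) > 0 such that ‖T(f₁,f₂)‖_1 ≤ C ‖f₁‖_q ‖f₂‖_1 for all nonnegative measurable functions f₁, f₂ on ℝ; that is, in dimension n = 2 the bilinear spherical average T is of strong type at every point (1/q, 1; 1) of the open line segment CP. -/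
open MeasureTheory ENNReal

/-- The bilinear spherical average in dimension `n = 2`:
`T(f₁,f₂)(x) = (1/(2π)) ∫₀^{2π} f₁(x − cos t) f₂(x − sin t) dt`. -/
noncomputable def T2 (f₁ f₂ : ℝ → ℝ) (x : ℝ) : ℝ≥0∞ :=
  (ENNReal.ofReal (2 * Real.pi))⁻¹ *
    ∫⁻ t in Set.Ioc 0 (2 * Real.pi),
      ENNReal.ofReal (f₁ (x - Real.cos t)) * ENNReal.ofReal (f₂ (x - Real.sin t))

open Real Set

section Auxiliary

/-- One-dimensional change of variables for lower Lebesgue integrals. -/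
lemma cov1D {s : Set ℝ} {f f' : ℝ → ℝ} (hs : MeasurableSet s)
    (hf' : ∀ x ∈ s, HasDerivWithinAt f (f' x) s x) (hf : Set.InjOn f s) (g : ℝ → ℝ≥0∞) :
    ∫⁻ x in f '' s, g x = ∫⁻ x in s, ENNReal.ofReal |f' x| * g (f x) := by
  simpa only [ContinuousLinearMap.det_toSpanSingleton] using
    MeasureTheory.lintegral_image_eq_lintegral_abs_det_fderiv_mul volume hs
      (fun x hx => (hf' x hx).hasFDerivWithinAt) hf g

lemma hasDerivAt_phi (t : ℝ) :
    HasDerivAt (fun t => Real.sin t - Real.cos t) (Real.cos t + Real.sin t) t := by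
  exact ((Real.hasDerivAt_sin t).sub (Real.hasDerivAt_cos t)).congr_deriv (by ring)

lemma cos_add_sin_eq (t : ℝ) :
    Real.cos t + Real.sin t = Real.sqrt 2 * Real.sin (t + Real.pi / 4) := by
  have h : Real.sqrt 2 * Real.sqrt 2 = 2 := Real.mul_self_sqrt (by norm_num)
  rw [Real.sin_add, Real.cos_pi_div_four, Real.sin_pi_div_four]
  linear_combination (-(Real.sin t + Real.cos t) / 2) * h

lemma sqrt2_pos : (0:ℝ) < Real.sqrt 2 := Real.sqrt_pos.2 (by norm_num)

lemma pos1 {t : ℝ} (h1 : 0 < t) (h2 : t < 3 * π / 4) : 0 < Real.cos t + Real.sin t := by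
  rw [cos_add_sin_eq]
  exact mul_pos sqrt2_pos (Real.sin_pos_of_pos_of_lt_pi (by linarith) (by linarith))

lemma neg2 {t : ℝ} (h1 : 3 * π / 4 < t) (h2 : t < 7 * π / 4) : Real.cos t + Real.sin t < 0 := by
  rw [cos_add_sin_eq]
  have h := Real.sin_pos_of_pos_of_lt_pi (x := t + π / 4 - π) (by linarith) (by linarith)
  rw [Real.sin_sub_pi] at h
  nlinarith [sqrt2_pos]

lemma pos3 {t : ℝ} (h1 : 7 * π / 4 < t) (h2 : t < 2 * π) : 0 < Real.cos t + Real.sin t := by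
  rw [cos_add_sin_eq]
  have h := Real.sin_pos_of_pos_of_lt_pi (x := t + π / 4 - 2 * π) (by linarith)
    (by linarith [Real.pi_pos])
  rw [Real.sin_sub_two_pi] at h
  exact mul_pos sqrt2_pos h

lemma phi_cont : Continuous (fun t => Real.sin t - Real.cos t) :=
  Real.continuous_sin.sub Real.continuous_cos

lemma inj1 : Set.InjOn (fun t => Real.sin t - Real.cos t) (Set.Ioc 0 (3 * π / 4)) := by
  have h : StrictMonoOn (fun t => Real.sin t - Real.cos t) (Set.Icc 0 (3 * π / 4)) := by
    apply strictMonoOn_of_deriv_pos (convex_Icc _ _) phi_cont.continuousOn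
    intro t ht
    rw [interior_Icc] at ht
    rw [(hasDerivAt_phi t).deriv]
    exact pos1 ht.1 ht.2
  exact h.injOn.mono Set.Ioc_subset_Icc_self

lemma inj2 : Set.InjOn (fun t => Real.sin t - Real.cos t) (Set.Ioc (3 * π / 4) (7 * π / 4)) := by
  have h : StrictAntiOn (fun t => Real.sin t - Real.cos t) (Set.Icc (3 * π / 4) (7 * π / 4)) := by
    apply strictAntiOn_of_deriv_neg (convex_Icc _ _) phi_cont.continuousOn
    intro t ht
    rw [interior_Icc] at ht
    rw [(hasDerivAt_phi t).deriv]
    exact neg2 ht.1 ht.2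
  exact h.injOn.mono Set.Ioc_subset_Icc_self

lemma inj3 : Set.InjOn (fun t => Real.sin t - Real.cos t) (Set.Ioc (7 * π / 4) (2 * π)) := by
  have h : StrictMonoOn (fun t => Real.sin t - Real.cos t) (Set.Icc (7 * π / 4) (2 * π)) := by
    apply strictMonoOn_of_deriv_pos (convex_Icc _ _) phi_cont.continuousOn
    intro t ht
    rw [interior_Icc] at ht
    rw [(hasDerivAt_phi t).deriv]
    exact pos3 ht.1 ht.2
  exact h.injOn.mono Set.Ioc_subset_Icc_self

lemma subst_le (H : ℝ → ℝ≥0∞) {s : Set ℝ} (hs : MeasurableSet s)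
    (hinj : Set.InjOn (fun t => Real.sin t - Real.cos t) s) :
    ∫⁻ t in s, ENNReal.ofReal |Real.cos t + Real.sin t| * H (Real.sin t - Real.cos t)
      ≤ ∫⁻ y, H y := by
  rw [← cov1D hs (fun t _ => (hasDerivAt_phi t).hasDerivWithinAt) hinj H]
  exact setLIntegral_le_lintegral _ _

lemma lemA (H : ℝ → ℝ≥0∞) :
    ∫⁻ t in Set.Ioc 0 (2 * π),
        ENNReal.ofReal |Real.cos t + Real.sin t| * H (Real.sin t - Real.cos t)
      ≤ 3 * ∫⁻ y, H y := by
  have hπ := Real.pi_pos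
  have e1 : Set.Ioc (0:ℝ) (2 * π)
      = (Set.Ioc 0 (3 * π / 4) ∪ Set.Ioc (3 * π / 4) (7 * π / 4)) ∪ Set.Ioc (7 * π / 4) (2 * π) := by
    rw [Set.Ioc_union_Ioc_eq_Ioc (by linarith) (by linarith),
        Set.Ioc_union_Ioc_eq_Ioc (by linarith) (by linarith)]
  have hd1 : Disjoint (Set.Ioc (0:ℝ) (3 * π / 4) ∪ Set.Ioc (3 * π / 4) (7 * π / 4))
      (Set.Ioc (7 * π / 4) (2 * π)) := by
    refine Disjoint.mono_left ?_ (Set.Ioc_disjoint_Ioc_of_le (a := (0:ℝ)) le_rfl)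
    rw [Set.Ioc_union_Ioc_eq_Ioc (by linarith) (by linarith)]
  rw [e1, lintegral_union measurableSet_Ioc hd1,
      lintegral_union measurableSet_Ioc (Set.Ioc_disjoint_Ioc_of_le le_rfl)]
  have h1 := subst_le H measurableSet_Ioc inj1
  have h2 := subst_le H measurableSet_Ioc inj2
  have h3 := subst_le H measurableSet_Ioc inj3
  calc _ ≤ (∫⁻ y, H y) + (∫⁻ y, H y) + (∫⁻ y, H y) := by
        gcongr
    _ = 3 * ∫⁻ y, H y := by ring

lemma transl (g : ℝ → ℝ≥0∞) (a b c : ℝ) :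
    ∫⁻ t in Set.Ioc a b, g (t + c) = ∫⁻ u in Set.Ioc (a + c) (b + c), g u := by
  have h := cov1D (f := fun t => t + c) (f' := fun _ => (1:ℝ)) (s := Set.Ioc a b)
    measurableSet_Ioc (fun t _ => ((hasDerivAt_id t).add_const c).hasDerivWithinAt)
    (fun x _ y _ h => by simpa using h) g
  rw [Set.image_add_const_Ioc] at h
  simpa using h.symm

lemma refl0 (g : ℝ → ℝ≥0∞) (a b c : ℝ) :
    ∫⁻ t in Set.Ioc a b, g (c - t) = ∫⁻ u in Set.Ico (c - b) (c - a), g u := by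
  have h := cov1D (f := fun t => c - t) (f' := fun _ => (-1:ℝ)) (s := Set.Ioc a b)
    measurableSet_Ioc (fun t _ => ((hasDerivAt_id t).const_sub c).hasDerivWithinAt)
    (fun x _ y _ h => by simpa [sub_right_inj] using h) g
  rw [Set.image_const_sub_Ioc] at h
  simpa using h.symm

lemma rpow_neg_le {x y : ℝ≥0∞} (h : x ≤ y) {a : ℝ} (ha : 0 ≤ a) : y ^ (-a) ≤ x ^ (-a) := by
  rw [ENNReal.rpow_neg, ENNReal.rpow_neg]
  exact ENNReal.inv_le_inv.2 (ENNReal.rpow_le_rpow h ha)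

/-- The explicit constant: integral over one period of the comparison function. -/
noncomputable def K0 (a : ℝ) : ℝ := ∫ v in Set.Ioc (0:ℝ) π, ((2 / π) * v) ^ (-a)

lemma K0_nonneg {a : ℝ} : 0 ≤ K0 a := by
  apply setIntegral_nonneg measurableSet_Ioc
  intro v hv
  have := Real.pi_pos
  have hv1 := hv.1
  positivity

lemma psi_integrable {a : ℝ} (ha0 : 0 < a) (ha1 : a < 1) :
    IntegrableOn (fun v : ℝ => ((2 / π) * v) ^ (-a)) (Set.Ioc 0 π) := by
  have hπ := Real.pi_pos
  have h1 : IntegrableOn (fun v : ℝ => v ^ (-a)) (Set.Ioc 0 π) := by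
    have := intervalIntegral.intervalIntegrable_rpow' (a := 0) (b := π) (r := -a) (by linarith)
    rwa [intervalIntegrable_iff, Set.uIoc_of_le hπ.le] at this
  have h2 : IntegrableOn (fun v : ℝ => (2 / π) ^ (-a) * v ^ (-a)) (Set.Ioc 0 π) :=
    h1.const_mul _
  apply h2.congr_fun (fun v hv => ?_) measurableSet_Ioc
  rw [Real.mul_rpow (by positivity) hv.1.le]

lemma oneperiod {a : ℝ} (ha0 : 0 < a) (ha1 : a < 1) :
    ∫⁻ u in Set.Ioc 0 π, (ENNReal.ofReal |Real.sin u|) ^ (-a)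
      ≤ 2 * ENNReal.ofReal (K0 a) := by
  have hπ := Real.pi_pos
  set ψ : ℝ → ℝ≥0∞ := fun v => (ENNReal.ofReal ((2 / π) * v)) ^ (-a) with hψ
  have hpoint : ∀ u ∈ Set.Ioc (0:ℝ) π,
      (ENNReal.ofReal |Real.sin u|) ^ (-a) ≤ ψ u + ψ (π - u) := by
    rintro u ⟨hu1, hu2⟩
    rw [abs_of_nonneg (Real.sin_nonneg_of_nonneg_of_le_pi hu1.le hu2)]
    rcases le_or_gt u (π / 2) with h | h
    · refine le_trans ?_ le_self_add
      exact rpow_neg_le (ENNReal.ofReal_le_ofReal (Real.mul_le_sin hu1.le h)) ha0.le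
    · refine le_trans ?_ le_add_self
      have hs : 2 / π * (π - u) ≤ Real.sin u := by
        rw [← Real.sin_pi_sub]
        exact Real.mul_le_sin (by linarith) (by linarith)
      exact rpow_neg_le (ENNReal.ofReal_le_ofReal hs) ha0.le
  have hψm : Measurable ψ := (ENNReal.measurable_ofReal.comp
    (measurable_const_mul _)).pow_const _
  have step1 : ∫⁻ u in Set.Ioc 0 π, (ENNReal.ofReal |Real.sin u|) ^ (-a)
      ≤ ∫⁻ u in Set.Ioc 0 π, (ψ u + ψ (π - u)) :=
    setLIntegral_mono (by fun_prop) hpoint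
  have hrefl : ∫⁻ u in Set.Ioc 0 π, ψ (π - u) = ∫⁻ v in Set.Ioc 0 π, ψ v := by
    rw [refl0 ψ 0 π π]
    simp only [sub_self, sub_zero]
    exact setLIntegral_congr Ico_ae_eq_Ioc
  have hA : ∫⁻ v in Set.Ioc 0 π, ψ v = ENNReal.ofReal (K0 a) := by
    rw [show ∫⁻ v in Set.Ioc 0 π, ψ v
        = ∫⁻ v in Set.Ioc 0 π, ENNReal.ofReal (((2 / π) * v) ^ (-a)) from
      setLIntegral_congr_fun measurableSet_Ioc (fun v hv => by
        rw [hψ]; exact ENNReal.ofReal_rpow_of_pos (by have := hv.1; positivity))]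
    rw [← ofReal_integral_eq_lintegral_ofReal (psi_integrable ha0 ha1)]
    · rfl
    · filter_upwards [ae_restrict_mem measurableSet_Ioc] with v hv
      have hv1 := hv.1
      positivity
  calc ∫⁻ u in Set.Ioc 0 π, (ENNReal.ofReal |Real.sin u|) ^ (-a)
      ≤ ∫⁻ u in Set.Ioc 0 π, (ψ u + ψ (π - u)) := step1
    _ = (∫⁻ u in Set.Ioc 0 π, ψ u) + ∫⁻ u in Set.Ioc 0 π, ψ (π - u) :=
        lintegral_add_left hψm _
    _ = ENNReal.ofReal (K0 a) + ENNReal.ofReal (K0 a) := by rw [hrefl, hA]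
    _ = 2 * ENNReal.ofReal (K0 a) := by ring

lemma lemB {a : ℝ} (ha0 : 0 < a) (ha1 : a < 1) :
    ∫⁻ t in Set.Ioc 0 (2 * π), (ENNReal.ofReal |Real.cos t + Real.sin t|) ^ (-a)
      ≤ 6 * ENNReal.ofReal (K0 a) := by
  have hπ := Real.pi_pos
  set G : ℝ → ℝ≥0∞ := fun u => (ENNReal.ofReal |Real.sin u|) ^ (-a) with hG
  have step1 : ∫⁻ t in Set.Ioc 0 (2 * π), (ENNReal.ofReal |Real.cos t + Real.sin t|) ^ (-a)
      ≤ ∫⁻ t in Set.Ioc 0 (2 * π), G (t + π / 4) := by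
    apply lintegral_mono
    intro t
    apply rpow_neg_le _ ha0.le
    apply ENNReal.ofReal_le_ofReal
    rw [cos_add_sin_eq]
    rw [abs_mul, abs_of_nonneg (Real.sqrt_nonneg 2)]
    nlinarith [Real.sq_sqrt (by norm_num : (0:ℝ) ≤ 2), Real.sqrt_nonneg 2,
      abs_nonneg (Real.sin (t + π / 4)), Real.sqrt_le_sqrt (by norm_num : (1:ℝ) ≤ 2),
      Real.sqrt_one]
  have step2 : ∫⁻ t in Set.Ioc 0 (2 * π), G (t + π / 4)
      = ∫⁻ u in Set.Ioc (0 + π / 4) (2 * π + π / 4), G u := transl G _ _ _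
  have step3 : ∫⁻ u in Set.Ioc (0 + π / 4) (2 * π + π / 4), G u
      ≤ ∫⁻ u in Set.Ioc 0 (3 * π), G u :=
    lintegral_mono_set (Set.Ioc_subset_Ioc (by linarith) (by linarith))
  have split : Set.Ioc (0:ℝ) (3 * π)
      = (Set.Ioc 0 π ∪ Set.Ioc π (2 * π)) ∪ Set.Ioc (2 * π) (3 * π) := by
    rw [Set.Ioc_union_Ioc_eq_Ioc (by linarith) (by linarith),
        Set.Ioc_union_Ioc_eq_Ioc (by linarith) (by linarith)]
  have hd1 : Disjoint (Set.Ioc (0:ℝ) π ∪ Set.Ioc π (2 * π)) (Set.Ioc (2 * π) (3 * π)) := by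
    refine Disjoint.mono_left ?_ (Set.Ioc_disjoint_Ioc_of_le (a := (0:ℝ)) le_rfl)
    rw [Set.Ioc_union_Ioc_eq_Ioc (by linarith) (by linarith)]
  have per1 : ∫⁻ u in Set.Ioc π (2 * π), G u = ∫⁻ u in Set.Ioc 0 π, G u := by
    have h := transl G 0 π π
    rw [show (0:ℝ) + π = π by ring, show π + π = 2 * π by ring] at h
    rw [← h]
    apply lintegral_congr
    intro v
    rw [hG]
    simp [Real.sin_add_pi]
  have per2 : ∫⁻ u in Set.Ioc (2 * π) (3 * π), G u = ∫⁻ u in Set.Ioc 0 π, G u := by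
    have h := transl G 0 π (2 * π)
    rw [show (0:ℝ) + 2 * π = 2 * π by ring, show π + 2 * π = 3 * π by ring] at h
    rw [← h]
    apply lintegral_congr
    intro v
    rw [hG]
    simp [Real.sin_add_two_pi]
  have hone := oneperiod ha0 ha1
  calc ∫⁻ t in Set.Ioc 0 (2 * π), (ENNReal.ofReal |Real.cos t + Real.sin t|) ^ (-a)
      ≤ ∫⁻ u in Set.Ioc 0 (3 * π), G u := le_trans step1 (step2 ▸ step3)
    _ = ((∫⁻ u in Set.Ioc 0 π, G u) + ∫⁻ u in Set.Ioc π (2 * π), G u)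
        + ∫⁻ u in Set.Ioc (2 * π) (3 * π), G u := by
        rw [split, lintegral_union measurableSet_Ioc hd1,
          lintegral_union measurableSet_Ioc (Set.Ioc_disjoint_Ioc_of_le le_rfl)]
    _ ≤ (2 * ENNReal.ofReal (K0 a) + 2 * ENNReal.ofReal (K0 a)) + 2 * ENNReal.ofReal (K0 a) := by
        rw [per1, per2]; gcongr
    _ = 6 * ENNReal.ofReal (K0 a) := by ring

lemma Znull : volume {t : ℝ | Real.cos t + Real.sin t = 0} = 0 := by
  refine measure_mono_null ?_ (Set.Countable.measure_zero
    (Set.countable_range (fun n : ℤ => (n:ℝ) * π - π / 4)) _)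
  intro t ht
  simp only [Set.mem_setOf_eq] at ht
  have h2 : Real.sin (t + π / 4) = 0 := by
    have h := cos_add_sin_eq t
    rw [ht] at h
    exact ((mul_eq_zero.1 h.symm).resolve_left sqrt2_pos.ne').symm ▸ rfl
  obtain ⟨n, hn⟩ := Real.sin_eq_zero_iff.1 h2
  exact ⟨n, by linarith⟩

lemma keybound (q : ℝ) (hq : 2 < q) (F : ℝ → ℝ≥0∞) (hF : Measurable F) (x : ℝ) :
    ∫⁻ t in Set.Ioc 0 (2 * π), F (x + (Real.sin t - Real.cos t))
      ≤ (3:ℝ≥0∞) ^ (1/q) * (6 * ENNReal.ofReal (K0 (1/(q-1)))) ^ (1/q.conjExponent)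
        * (∫⁻ y, F y ^ q) ^ (1/q) := by
  have hπ := Real.pi_pos
  have hq1 : (1:ℝ) < q := by linarith
  have hq1' : (0:ℝ) < q - 1 := by linarith
  have hqc' : (0:ℝ) < q.conjExponent := by rw [Real.conjExponent]; positivity
  have hq0 : (0:ℝ) < q := by linarith
  have hqc : q.HolderConjugate q.conjExponent := Real.HolderConjugate.conjExponent hq1
  set μ := volume.restrict (Set.Ioc 0 (2 * π)) with hμ
  set W : ℝ → ℝ≥0∞ := fun t => ENNReal.ofReal |Real.cos t + Real.sin t| with hW
  set f : ℝ → ℝ≥0∞ := fun t => W t ^ (1/q) * F (x + (Real.sin t - Real.cos t)) with hf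
  set g : ℝ → ℝ≥0∞ := fun t => W t ^ (-(1/q)) with hgdef
  have hWm : Measurable W :=
    ENNReal.measurable_ofReal.comp (Real.measurable_cos.add Real.measurable_sin).abs
  have hfm : Measurable f := (hWm.pow_const _).mul
    (hF.comp (measurable_const.add (Real.measurable_sin.sub Real.measurable_cos)))
  have hgm : Measurable g := hWm.pow_const _
  have hae : ∀ᵐ t ∂μ, F (x + (Real.sin t - Real.cos t)) = (f * g) t := by
    apply ae_restrict_of_ae
    filter_upwards [measure_eq_zero_iff_ae_notMem.mp Znull] with t ht
    have hW0 : W t ≠ 0 := by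
      simp only [hW, ne_eq, ENNReal.ofReal_eq_zero, abs_nonpos_iff]
      exact ht
    have hWt : W t ≠ ⊤ := ENNReal.ofReal_ne_top
    show F (x + (Real.sin t - Real.cos t)) = f t * g t
    rw [hf, hgdef]
    simp only
    rw [mul_right_comm, ← ENNReal.rpow_add _ _ hW0 hWt]
    norm_num
  have hfactor1 : ∫⁻ t, f t ^ q ∂μ ≤ 3 * ∫⁻ y, F y ^ q := by
    have e : ∀ t, f t ^ q = W t * (fun s => F (x + s) ^ q) (Real.sin t - Real.cos t) := by
      intro t
      rw [hf]
      simp only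
      rw [ENNReal.mul_rpow_of_nonneg _ _ hq0.le, ← ENNReal.rpow_mul,
        one_div_mul_cancel hq0.ne', ENNReal.rpow_one]
    calc ∫⁻ t, f t ^ q ∂μ = ∫⁻ t in Set.Ioc 0 (2 * π),
          ENNReal.ofReal |Real.cos t + Real.sin t|
            * (fun s => F (x + s) ^ q) (Real.sin t - Real.cos t) := by
          rw [hμ]; exact lintegral_congr e
      _ ≤ 3 * ∫⁻ s, F (x + s) ^ q := lemA _
      _ = 3 * ∫⁻ y, F y ^ q := by
          rw [lintegral_add_left_eq_self (fun y => F y ^ q) x]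
  have hfactor2 : ∫⁻ t, g t ^ q.conjExponent ∂μ ≤ 6 * ENNReal.ofReal (K0 (1/(q-1))) := by
    have e : ∀ t, g t ^ q.conjExponent = W t ^ (-(1/(q-1))) := by
      intro t
      rw [hgdef]
      simp only
      rw [← ENNReal.rpow_mul]
      congr 1
      rw [Real.conjExponent]
      field_simp
    calc ∫⁻ t, g t ^ q.conjExponent ∂μ
        = ∫⁻ t in Set.Ioc 0 (2 * π), W t ^ (-(1/(q-1))) := by rw [hμ]; exact lintegral_congr e
      _ ≤ 6 * ENNReal.ofReal (K0 (1/(q-1))) :=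
          lemB (by positivity) (by rw [div_lt_one (by linarith)]; linarith)
  calc ∫⁻ t, F (x + (Real.sin t - Real.cos t)) ∂μ
      = ∫⁻ t, (f * g) t ∂μ := lintegral_congr_ae hae
    _ ≤ (∫⁻ t, f t ^ q ∂μ) ^ (1/q) * (∫⁻ t, g t ^ q.conjExponent ∂μ) ^ (1/q.conjExponent) :=
        ENNReal.lintegral_mul_le_Lp_mul_Lq μ hqc hfm.aemeasurable hgm.aemeasurable
    _ ≤ (3 * ∫⁻ y, F y ^ q) ^ (1/q)
          * (6 * ENNReal.ofReal (K0 (1/(q-1)))) ^ (1/q.conjExponent) := by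
        exact mul_le_mul' (ENNReal.rpow_le_rpow hfactor1 (by positivity))
          (ENNReal.rpow_le_rpow hfactor2 (by positivity))
    _ = (3:ℝ≥0∞) ^ (1/q) * (6 * ENNReal.ofReal (K0 (1/(q-1)))) ^ (1/q.conjExponent)
          * (∫⁻ y, F y ^ q) ^ (1/q) := by
        rw [ENNReal.mul_rpow_of_nonneg _ _ (by positivity)]
        ring

end Auxiliary

theorem strong_type_on_open_segment_CP (q : ℝ) (hq : 2 < q) :
    ∃ C : ℝ, 0 < C ∧ ∀ f₁ f₂ : ℝ → ℝ, Measurable f₁ → Measurable f₂ →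
      (∀ x, 0 ≤ f₁ x) → (∀ x, 0 ≤ f₂ x) →
      lpNorm 1 (T2 f₁ f₂) ≤ ENNReal.ofReal C *
        lpNorm (ENNReal.ofReal q) (fun x => ENNReal.ofReal (f₁ x)) *
        lpNorm 1 (fun x => ENNReal.ofReal (f₂ x)) := by
  have hπ := Real.pi_pos
  have hπ3 := Real.pi_gt_three
  have hq1' : (0:ℝ) < q - 1 := by linarith
  have hqc' : (0:ℝ) < q.conjExponent := by rw [Real.conjExponent]; positivity
  have hK0 : 0 ≤ K0 (1/(q-1)) := K0_nonneg
  set Creal : ℝ := 3 ^ (1/q) * (6 * K0 (1/(q-1))) ^ (1/q.conjExponent) + 1 with hCreal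
  have hCpos : 0 < Creal := by positivity
  refine ⟨Creal, hCpos, ?_⟩
  intro f₁ f₂ hm₁ hm₂ hn₁ hn₂
  set F₁ : ℝ → ℝ≥0∞ := fun x => ENNReal.ofReal (f₁ x) with hF₁
  set F₂ : ℝ → ℝ≥0∞ := fun x => ENNReal.ofReal (f₂ x) with hF₂
  have hF₁m : Measurable F₁ := ENNReal.measurable_ofReal.comp hm₁
  have hF₂m : Measurable F₂ := ENNReal.measurable_ofReal.comp hm₂
  set D : ℝ≥0∞ := (3:ℝ≥0∞) ^ (1/q) * (6 * ENNReal.ofReal (K0 (1/(q-1)))) ^ (1/q.conjExponent)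
    with hD
  set Nq : ℝ≥0∞ := (∫⁻ y, F₁ y ^ q) ^ (1/q) with hNq
  have lp1 : lpNorm 1 (T2 f₁ f₂) = ∫⁻ x, T2 f₁ f₂ x := by
    simp [_root_.lpNorm]
  have lp2 : lpNorm (ENNReal.ofReal q) F₁ = Nq := by
    rw [_root_.lpNorm, if_neg ENNReal.ofReal_ne_top, ENNReal.toReal_ofReal (by linarith)]
  have lp3 : lpNorm 1 F₂ = ∫⁻ x, F₂ x := by
    simp [_root_.lpNorm]
  rw [lp1, lp2, lp3]
  have hPm : Measurable (Function.uncurry fun x t =>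
      F₁ (x - Real.cos t) * F₂ (x - Real.sin t)) := by
    refine Measurable.mul (f := fun p : ℝ × ℝ => F₁ (p.1 - Real.cos p.2))
      (g := fun p : ℝ × ℝ => F₂ (p.1 - Real.sin p.2)) ?_ ?_
    · exact hF₁m.comp (measurable_fst.sub (Real.measurable_cos.comp measurable_snd))
    · exact hF₂m.comp (measurable_fst.sub (Real.measurable_sin.comp measurable_snd))
  have hQm : Measurable (Function.uncurry fun t x =>
      F₁ (x + (Real.sin t - Real.cos t)) * F₂ x) := by
    refine Measurable.mul (f := fun p : ℝ × ℝ => F₁ (p.2 + (Real.sin p.1 - Real.cos p.1)))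
      (g := fun p : ℝ × ℝ => F₂ p.2) ?_ ?_
    · exact hF₁m.comp (measurable_snd.add
        ((Real.measurable_sin.sub Real.measurable_cos).comp measurable_fst))
    · exact hF₂m.comp measurable_snd
  have swap1 : ∫⁻ x, ∫⁻ t in Set.Ioc 0 (2 * Real.pi),
        F₁ (x - Real.cos t) * F₂ (x - Real.sin t) ∂volume ∂volume
      = ∫⁻ t in Set.Ioc 0 (2 * Real.pi), ∫⁻ x, F₁ (x - Real.cos t) * F₂ (x - Real.sin t) :=
    lintegral_lintegral_swap hPm.aemeasurable
  have shift : ∀ t : ℝ, ∫⁻ x, F₁ (x - Real.cos t) * F₂ (x - Real.sin t)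
      = ∫⁻ x, F₁ (x + (Real.sin t - Real.cos t)) * F₂ x := by
    intro t
    have h := lintegral_add_right_eq_self (μ := (volume : Measure ℝ))
      (fun y => F₁ (y - Real.cos t) * F₂ (y - Real.sin t)) (Real.sin t)
    rw [← h]
    apply lintegral_congr
    intro x
    simp only [add_sub_cancel_right, add_sub_assoc]
  have swap2 : ∫⁻ t in Set.Ioc 0 (2 * Real.pi),
        ∫⁻ x, F₁ (x + (Real.sin t - Real.cos t)) * F₂ x
      = ∫⁻ x, ∫⁻ t in Set.Ioc 0 (2 * Real.pi),
          F₁ (x + (Real.sin t - Real.cos t)) * F₂ x ∂volume ∂volume :=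
    lintegral_lintegral_swap hQm.aemeasurable
  have inner_bound : ∀ x : ℝ, ∫⁻ t in Set.Ioc 0 (2 * Real.pi),
        F₁ (x + (Real.sin t - Real.cos t)) * F₂ x ≤ (D * Nq) * F₂ x := by
    intro x
    rw [lintegral_mul_const' (F₂ x) _ ENNReal.ofReal_ne_top]
    exact mul_le_mul_left (keybound q hq F₁ hF₁m x) _
  have cne : (ENNReal.ofReal (2 * Real.pi))⁻¹ ≠ ⊤ := by
    simp [ENNReal.ofReal_eq_zero]
    linarith
  have cle : (ENNReal.ofReal (2 * Real.pi))⁻¹ ≤ 1 := by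
    rw [ENNReal.inv_le_one]
    exact ENNReal.one_le_ofReal.2 (by linarith)
  have hDC : D ≤ ENNReal.ofReal Creal := by
    rw [hD, hCreal]
    have e1 : (3:ℝ≥0∞) = ENNReal.ofReal 3 := by norm_num
    have e2 : (6:ℝ≥0∞) * ENNReal.ofReal (K0 (1/(q-1)))
        = ENNReal.ofReal (6 * K0 (1/(q-1))) := by
      rw [ENNReal.ofReal_mul (by norm_num)]
      norm_num
    rw [e1, e2, ENNReal.ofReal_rpow_of_nonneg (by norm_num) (by positivity),
      ENNReal.ofReal_rpow_of_nonneg (by positivity) (by positivity),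
      ← ENNReal.ofReal_mul (by positivity)]
    exact ENNReal.ofReal_le_ofReal (by linarith)
  calc ∫⁻ x, T2 f₁ f₂ x
      = (ENNReal.ofReal (2 * Real.pi))⁻¹ * ∫⁻ x, ∫⁻ t in Set.Ioc 0 (2 * Real.pi),
          F₁ (x - Real.cos t) * F₂ (x - Real.sin t) ∂volume ∂volume := by
        unfold T2; exact lintegral_const_mul' _ _ cne
    _ ≤ ∫⁻ x, ∫⁻ t in Set.Ioc 0 (2 * Real.pi),
          F₁ (x - Real.cos t) * F₂ (x - Real.sin t) ∂volume ∂volume := by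
        exact le_trans (mul_le_mul_left cle _) (one_mul _).le
    _ = ∫⁻ x, ∫⁻ t in Set.Ioc 0 (2 * Real.pi),
          F₁ (x + (Real.sin t - Real.cos t)) * F₂ x ∂volume ∂volume := by
        rw [swap1, ← swap2]
        exact lintegral_congr fun t => shift t
    _ ≤ ∫⁻ x, (D * Nq) * F₂ x := lintegral_mono inner_bound
    _ = (D * Nq) * ∫⁻ x, F₂ x := lintegral_const_mul _ hF₂m
    _ ≤ (ENNReal.ofReal Creal * Nq) * ∫⁻ x, F₂ x := by
        exact mul_le_mul_left (mul_le_mul_left hDC _) _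
    _ = ENNReal.ofReal Creal * Nq * ∫⁻ x, F₂ x := rfl
end

section
/- There exists a finite constant C > 0 such that for every measurable set E ⊆ ℝ of finite Lebesgue measure and every nonnegative measurable function f₂ on ℝ, ‖T(χ_E, f₂)‖_1 ≤ C |E|^{1/2} ‖f₂‖_1; that is, in dimension n = 2 the operator T is of restricted type at the point P = (1/2, 1; 1). -/
open MeasureTheory ENNReal

namespace RestrictedTypeAux


noncomputable section
-- helper: derivative
lemma hasDerivAt_g (t : ℝ) :
    HasDerivAt (fun t => Real.sin t - Real.cos t) (Real.cos t + Real.sin t) t := by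
  have := (Real.hasDerivAt_sin t).sub (Real.hasDerivAt_cos t)
  rw [sub_neg_eq_add] at this; exact this

lemma gp_eq (t : ℝ) : Real.cos t + Real.sin t = Real.sqrt 2 * Real.sin (t + Real.pi/4) := by
  rw [Real.sin_add, Real.cos_pi_div_four, Real.sin_pi_div_four]
  have h2 : Real.sqrt 2 * (Real.sqrt 2 / 2) = 1 := by
    rw [mul_div_assoc'] ; rw [Real.mul_self_sqrt (by norm_num : (0:ℝ) ≤ 2)]; norm_num
  ring_nf
  rw [Real.sq_sqrt (by norm_num : (0:ℝ) ≤ 2)]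
  ring

-- change of variables: volume of image
lemma vol_image_eq (s : Set ℝ) (hs : MeasurableSet s)
    (hinj : Set.InjOn (fun t => Real.sin t - Real.cos t) s) :
    volume ((fun t => Real.sin t - Real.cos t) '' s)
      = ∫⁻ t in s, ENNReal.ofReal |Real.cos t + Real.sin t| := by
  have := lintegral_image_eq_lintegral_abs_det_fderiv_mul volume hs
    (f' := fun t => (1 : ℝ →L[ℝ] ℝ).smulRight (Real.cos t + Real.sin t))
    (fun x _ => ((hasDerivAt_g x).hasDerivWithinAt).hasFDerivWithinAt) hinj 1
  simpa [ContinuousLinearMap.det_toSpanSingleton, setLIntegral_one] using this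
end
noncomputable section
open Real

lemma deriv_g : deriv (fun t => Real.sin t - Real.cos t) = fun t => Real.cos t + Real.sin t := by
  funext t; exact (hasDerivAt_g t).deriv

lemma cont_g : Continuous (fun t => Real.sin t - Real.cos t) :=
  Real.continuous_sin.sub Real.continuous_cos

-- sign of derivative on the three pieces
lemma inj1 : Set.InjOn (fun t => Real.sin t - Real.cos t) (Set.Icc 0 (3*Real.pi/4)) := by
  apply StrictMonoOn.injOn
  apply strictMonoOn_of_deriv_pos (convex_Icc _ _) cont_g.continuousOn
  intro x hx
  rw [interior_Icc, Set.mem_Ioo] at hx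
  rw [deriv_g]; simp only []; rw [gp_eq]
  have hpi := Real.pi_pos
  apply mul_pos (Real.sqrt_pos.2 (by norm_num))
  apply Real.sin_pos_of_pos_of_lt_pi <;> nlinarith [hx.1, hx.2]

lemma inj2 : Set.InjOn (fun t => Real.sin t - Real.cos t)
    (Set.Icc (3*Real.pi/4) (7*Real.pi/4)) := by
  apply StrictAntiOn.injOn
  apply strictAntiOn_of_deriv_neg (convex_Icc _ _) cont_g.continuousOn
  intro x hx
  rw [interior_Icc, Set.mem_Ioo] at hx
  rw [deriv_g]; simp only []; rw [gp_eq]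
  have hpi := Real.pi_pos
  have : Real.sin (x + Real.pi/4) < 0 := by
    have := Real.sin_pos_of_pos_of_lt_pi (x := x + Real.pi/4 - Real.pi)
      (by nlinarith [hx.1]) (by nlinarith [hx.2])
    rw [Real.sin_sub_pi] at this; linarith
  exact mul_neg_of_pos_of_neg (Real.sqrt_pos.2 (by norm_num)) this

lemma inj3 : Set.InjOn (fun t => Real.sin t - Real.cos t)
    (Set.Icc (7*Real.pi/4) (2*Real.pi)) := by
  apply StrictMonoOn.injOn
  apply strictMonoOn_of_deriv_pos (convex_Icc _ _) cont_g.continuousOn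
  intro x hx
  rw [interior_Icc, Set.mem_Ioo] at hx
  rw [deriv_g]; simp only []; rw [gp_eq]
  have hpi := Real.pi_pos
  have : 0 < Real.sin (x + Real.pi/4) := by
    have := Real.sin_pos_of_pos_of_lt_pi (x := x + Real.pi/4 - 2*Real.pi)
      (by nlinarith [hx.1]) (by nlinarith [hx.2])
    rwa [Real.sin_sub_two_pi] at this
  exact mul_pos (Real.sqrt_pos.2 (by norm_num)) this
end
noncomputable section
open Real

lemma measurable_gp : Measurable (fun t => Real.cos t + Real.sin t) :=
  Real.measurable_cos.add Real.measurable_sin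

lemma good_piece {B : Set ℝ} (hB : MeasurableSet B) {δ : ℝ} (hδ : 0 < δ)
    {a b : ℝ} (hinj : Set.InjOn (fun t => Real.sin t - Real.cos t) (Set.Icc a b)) :
    volume {t | t ∈ Set.Icc a b ∧ δ ≤ |Real.cos t + Real.sin t| ∧
        (Real.sin t - Real.cos t) ∈ B}
      ≤ volume B / ENNReal.ofReal δ := by
  set S : Set ℝ := {t | t ∈ Set.Icc a b ∧ δ ≤ |Real.cos t + Real.sin t| ∧
      (Real.sin t - Real.cos t) ∈ B} with hS
  have hSm : MeasurableSet S := by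
    have : S = Set.Icc a b ∩ ({t | δ ≤ |Real.cos t + Real.sin t|} ∩
        ((fun t => Real.sin t - Real.cos t) ⁻¹' B)) := by
      ext t; simp [hS, Set.mem_setOf_eq, and_assoc]
    rw [this]
    exact measurableSet_Icc.inter ((measurableSet_le measurable_const
      measurable_gp.abs).inter (cont_g.measurable hB))
  have hSsub : S ⊆ Set.Icc a b := fun t ht => ht.1
  have key : ENNReal.ofReal δ * volume S ≤ volume B := by
    calc ENNReal.ofReal δ * volume S = ∫⁻ _ in S, ENNReal.ofReal δ := by
            rw [setLIntegral_const, mul_comm]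
      _ ≤ ∫⁻ t in S, ENNReal.ofReal |Real.cos t + Real.sin t| := by
            apply setLIntegral_mono' hSm
            intro t ht
            exact ENNReal.ofReal_le_ofReal ht.2.1
      _ = volume ((fun t => Real.sin t - Real.cos t) '' S) :=
            (vol_image_eq S hSm (hinj.mono hSsub)).symm
      _ ≤ volume B := by
            apply measure_mono
            rintro _ ⟨t, ht, rfl⟩
            exact ht.2.2
  rw [ENNReal.le_div_iff_mul_le (Or.inl (by simp [ENNReal.ofReal_eq_zero, not_le, hδ]))
    (Or.inl ENNReal.ofReal_ne_top), mul_comm]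
  exact key
end
noncomputable section
open Real

lemma small_sin {δ v : ℝ} (hδ0 : 0 < δ) (hδ : δ ≤ 3/4)
    (hv : |v| ≤ Real.pi/2) (hs : |Real.sin v| < δ) : |v| ≤ (4/3)*δ := by
  have hpi := Real.pi_gt_three
  have habs : |Real.sin v| = Real.sin |v| := by
    rcases le_or_gt 0 v with h | h
    · rw [abs_of_nonneg h, abs_of_nonneg (Real.sin_nonneg_of_nonneg_of_le_pi h (by
        rw [abs_of_nonneg h] at hv; linarith))]
    · have h2 : 0 ≤ Real.sin (-v) := Real.sin_nonneg_of_nonneg_of_le_pi (by linarith)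
        (by rw [abs_of_neg h] at hv; linarith)
      rw [Real.sin_neg] at h2
      rw [abs_of_neg h, Real.sin_neg]
      exact abs_of_nonpos (by linarith)
  set u := |v| with hu
  have hu0 : 0 ≤ u := abs_nonneg v
  rw [habs] at hs
  rcases le_or_gt u 1 with h1 | h1
  · rcases eq_or_lt_of_le hu0 with h0 | h0
    · rw [← h0]; positivity
    · have := Real.sin_gt_sub_cube h0
      have hcube : u^3 ≤ u := by nlinarith [mul_nonneg hu0 hu0]
      linarith
  · exfalso
    have hmem1 : (1:ℝ) ∈ Set.Icc (-(Real.pi/2)) (Real.pi/2) := by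
      constructor <;> nlinarith
    have hmemu : u ∈ Set.Icc (-(Real.pi/2)) (Real.pi/2) := by
      constructor <;> nlinarith
    have hmono := Real.strictMonoOn_sin.monotoneOn hmem1 hmemu h1.le
    have hsin1 : (3:ℝ)/4 < Real.sin 1 := by
      have := Real.sin_gt_sub_cube (by norm_num : (0:ℝ) < 1)
      nlinarith
    linarith

lemma bad_subset {δ : ℝ} (hδ0 : 0 < δ) (hδ : δ ≤ 3/4) :
    {t | t ∈ Set.Ioc 0 (2*Real.pi) ∧ |Real.cos t + Real.sin t| < δ} ⊆
      Set.Icc (-(Real.pi/4) - (4/3)*δ) (-(Real.pi/4) + (4/3)*δ) ∪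
      Set.Icc (3*Real.pi/4 - (4/3)*δ) (3*Real.pi/4 + (4/3)*δ) ∪
      Set.Icc (7*Real.pi/4 - (4/3)*δ) (7*Real.pi/4 + (4/3)*δ) := by
  intro t ⟨⟨ht0, ht2⟩, habs⟩
  have hpi := Real.pi_gt_three
  have hsin : |Real.sin (t + Real.pi/4)| < δ := by
    rw [gp_eq] at habs
    rw [abs_mul, abs_of_nonneg (Real.sqrt_nonneg 2)] at habs
    nlinarith [Real.sq_sqrt (by norm_num : (0:ℝ) ≤ 2), Real.sqrt_nonneg 2,
      abs_nonneg (Real.sin (t + Real.pi/4))]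
  rcases le_or_gt (t + Real.pi/4) (Real.pi/2) with h1 | h1
  · left; left
    have := small_sin hδ0 hδ (v := t + Real.pi/4)
      (by rw [abs_le]; constructor <;> linarith) hsin
    rw [abs_le] at this
    constructor <;> [linarith [this.1]; linarith [this.2]]
  · rcases le_or_gt (t + Real.pi/4) (3*Real.pi/2) with h2 | h2
    · left; right
      have hv : |Real.sin (t + Real.pi/4 - Real.pi)| < δ := by
        rw [Real.sin_sub_pi, abs_neg]; exact hsin
      have := small_sin hδ0 hδ (v := t + Real.pi/4 - Real.pi)
        (by rw [abs_le]; constructor <;> linarith) hv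
      rw [abs_le] at this
      constructor <;> [linarith [this.1]; linarith [this.2]]
    · right
      have hv : |Real.sin (t + Real.pi/4 - 2*Real.pi)| < δ := by
        rw [Real.sin_sub_two_pi]; exact hsin
      have := small_sin hδ0 hδ (v := t + Real.pi/4 - 2*Real.pi)
        (by rw [abs_le]; constructor <;> linarith) hv
      rw [abs_le] at this
      constructor <;> [linarith [this.1]; linarith [this.2]]

lemma bad_measure {δ : ℝ} (hδ0 : 0 < δ) (hδ : δ ≤ 3/4) :
    volume {t | t ∈ Set.Ioc 0 (2*Real.pi) ∧ |Real.cos t + Real.sin t| < δ}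
      ≤ ENNReal.ofReal (8*δ) := by
  refine le_trans (measure_mono (bad_subset hδ0 hδ)) ?_
  refine le_trans (measure_union_le _ _) ?_
  refine le_trans (add_le_add_left (measure_union_le _ _) _) ?_
  have h3 : ∀ c : ℝ, volume (Set.Icc (c - (4/3)*δ) (c + (4/3)*δ))
      = ENNReal.ofReal ((8/3)*δ) := by
    intro c; rw [Real.volume_Icc]; congr 1; ring
  rw [h3, h3, h3, ← ENNReal.ofReal_add (by positivity) (by positivity),
    ← ENNReal.ofReal_add (by positivity) (by positivity)]
  apply ENNReal.ofReal_le_ofReal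
  linarith
end
noncomputable section
open Real

lemma delta_bound {B : Set ℝ} (hB : MeasurableSet B) {δ : ℝ} (hδ0 : 0 < δ) (hδ : δ ≤ 3/4) :
    volume (Set.Ioc 0 (2*Real.pi) ∩ {t | Real.sin t - Real.cos t ∈ B})
      ≤ 3 * (volume B / ENNReal.ofReal δ) + ENNReal.ofReal (8*δ) := by
  have hpi := Real.pi_gt_three
  set S1 := {t | t ∈ Set.Icc 0 (3*Real.pi/4) ∧ δ ≤ |Real.cos t + Real.sin t| ∧
      (Real.sin t - Real.cos t) ∈ B}
  set S2 := {t | t ∈ Set.Icc (3*Real.pi/4) (7*Real.pi/4) ∧ δ ≤ |Real.cos t + Real.sin t| ∧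
      (Real.sin t - Real.cos t) ∈ B}
  set S3 := {t | t ∈ Set.Icc (7*Real.pi/4) (2*Real.pi) ∧ δ ≤ |Real.cos t + Real.sin t| ∧
      (Real.sin t - Real.cos t) ∈ B}
  set Bad := {t | t ∈ Set.Ioc 0 (2*Real.pi) ∧ |Real.cos t + Real.sin t| < δ}
  have hsub : Set.Ioc 0 (2*Real.pi) ∩ {t | Real.sin t - Real.cos t ∈ B}
      ⊆ (S1 ∪ S2 ∪ S3) ∪ Bad := by
    intro t ⟨ht, htB⟩
    rcases lt_or_ge (|Real.cos t + Real.sin t|) δ with h | h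
    · exact Or.inr ⟨ht, h⟩
    · left
      rcases le_or_gt t (3*Real.pi/4) with h1 | h1
      · exact Or.inl (Or.inl ⟨⟨ht.1.le, h1⟩, h, htB⟩)
      · rcases le_or_gt t (7*Real.pi/4) with h2 | h2
        · exact Or.inl (Or.inr ⟨⟨h1.le, h2⟩, h, htB⟩)
        · exact Or.inr ⟨⟨h2.le, ht.2⟩, h, htB⟩
  calc volume (Set.Ioc 0 (2*Real.pi) ∩ {t | Real.sin t - Real.cos t ∈ B})
      ≤ volume ((S1 ∪ S2 ∪ S3) ∪ Bad) := measure_mono hsub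
    _ ≤ volume (S1 ∪ S2 ∪ S3) + volume Bad := measure_union_le _ _
    _ ≤ (volume S1 + volume S2 + volume S3) + volume Bad := by
        gcongr
        exact le_trans (measure_union_le _ _) (add_le_add_left (measure_union_le _ _) _)
    _ ≤ (volume B / ENNReal.ofReal δ + volume B / ENNReal.ofReal δ
          + volume B / ENNReal.ofReal δ) + ENNReal.ofReal (8*δ) := by
        gcongr
        · exact good_piece hB hδ0 inj1
        · exact good_piece hB hδ0 inj2
        · exact good_piece hB hδ0 inj3
        · exact bad_measure hδ0 hδ
    _ = 3 * (volume B / ENNReal.ofReal δ) + ENNReal.ofReal (8*δ) := by ring_nf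
end
noncomputable section
open Real

lemma sqrt_ofReal (r : ℝ) (hr : 0 ≤ r) :
    (ENNReal.ofReal r) ^ ((1:ℝ)/2) = ENNReal.ofReal (Real.sqrt r) := by
  rw [ENNReal.ofReal_rpow_of_nonneg hr (by norm_num), Real.sqrt_eq_rpow]

lemma key_bound {B : Set ℝ} (hB : MeasurableSet B) :
    volume (Set.Ioc 0 (2*Real.pi) ∩ {t | Real.sin t - Real.cos t ∈ B})
      ≤ ENNReal.ofReal 14 * (volume B) ^ ((1:ℝ)/2) := by
  set m := volume B with hm
  rcases eq_or_ne m ∞ with hminf | hmfin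
  · rw [hminf, ENNReal.top_rpow_of_pos (by norm_num), ENNReal.mul_top (by simp)]
    exact le_top
  rcases eq_or_ne m 0 with hm0 | hm0
  · have hzero : volume (Set.Ioc 0 (2*Real.pi) ∩ {t | Real.sin t - Real.cos t ∈ B}) ≤ 0 := by
      apply ENNReal.le_of_forall_pos_le_add
      intro ε hε _
      rw [zero_add]
      set δ : ℝ := min (3/4) (ε/8) with hδdef
      have hδ0 : 0 < δ := lt_min (by norm_num) (by positivity)
      have hδ34 : δ ≤ 3/4 := min_le_left _ _
      calc volume (Set.Ioc 0 (2*Real.pi) ∩ {t | Real.sin t - Real.cos t ∈ B})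
          ≤ 3 * (m / ENNReal.ofReal δ) + ENNReal.ofReal (8*δ) := delta_bound hB hδ0 hδ34
        _ = ENNReal.ofReal (8*δ) := by rw [hm0]; simp
        _ ≤ (ε : ℝ≥0∞) := by
            rw [← ENNReal.ofReal_coe_nnreal]
            apply ENNReal.ofReal_le_ofReal
            have : δ ≤ ε/8 := min_le_right _ _
            push_cast
            linarith
    simp only [nonpos_iff_eq_zero] at hzero
    rw [hzero]
    exact zero_le
  · -- 0 < m < ∞
    set r : ℝ := m.toReal with hr
    have hr0 : 0 < r := ENNReal.toReal_pos hm0 hmfin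
    have hmr : m = ENNReal.ofReal r := (ENNReal.ofReal_toReal hmfin).symm
    rcases le_or_gt r (9/16) with hsmall | hbig
    · set δ : ℝ := Real.sqrt r with hδdef
      have hδ0 : 0 < δ := Real.sqrt_pos.2 hr0
      have hδ34 : δ ≤ 3/4 := by
        have := Real.sqrt_le_sqrt hsmall
        rwa [show (9/16:ℝ) = (3/4)^2 by norm_num, Real.sqrt_sq (by norm_num : (0:ℝ) ≤ 3/4)]
          at this
      have hdiv : m / ENNReal.ofReal δ = ENNReal.ofReal δ := by
        rw [hmr, show r = δ * δ from (Real.mul_self_sqrt hr0.le).symm,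
          ENNReal.ofReal_mul hδ0.le, mul_div_assoc,
          ENNReal.div_self (by simp [hδ0]) ENNReal.ofReal_ne_top, mul_one]
      calc volume (Set.Ioc 0 (2*Real.pi) ∩ {t | Real.sin t - Real.cos t ∈ B})
          ≤ 3 * (m / ENNReal.ofReal δ) + ENNReal.ofReal (8*δ) := delta_bound hB hδ0 hδ34
        _ = 3 * ENNReal.ofReal δ + ENNReal.ofReal (8*δ) := by rw [hdiv]
        _ = ENNReal.ofReal (11*δ) := by
            rw [show (3:ℝ≥0∞) = ENNReal.ofReal 3 by simp [ENNReal.ofReal_ofNat],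
              ← ENNReal.ofReal_mul (by norm_num),
              ← ENNReal.ofReal_add (by positivity) (by positivity)]
            congr 1; ring
        _ ≤ ENNReal.ofReal 14 * m ^ ((1:ℝ)/2) := by
            rw [hmr, sqrt_ofReal r hr0.le, ← hδdef, ← ENNReal.ofReal_mul (by norm_num)]
            apply ENNReal.ofReal_le_ofReal
            linarith
    · calc volume (Set.Ioc 0 (2*Real.pi) ∩ {t | Real.sin t - Real.cos t ∈ B})
          ≤ volume (Set.Ioc 0 (2*Real.pi)) := measure_mono Set.inter_subset_left
        _ = ENNReal.ofReal (2*Real.pi) := by rw [Real.volume_Ioc, sub_zero]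
        _ ≤ ENNReal.ofReal 14 * ENNReal.ofReal (3/4) := by
            rw [← ENNReal.ofReal_mul (by norm_num)]
            apply ENNReal.ofReal_le_ofReal
            have := Real.pi_lt_d2
            linarith
        _ ≤ ENNReal.ofReal 14 * m ^ ((1:ℝ)/2) := by
            gcongr
            have h1 : ENNReal.ofReal (9/16 : ℝ) ≤ m :=
              ENNReal.ofReal_le_of_le_toReal hbig.le
            have h2 := ENNReal.rpow_le_rpow h1 (by norm_num : (0:ℝ) ≤ 1/2)
            rwa [sqrt_ofReal _ (by norm_num),
              show Real.sqrt (9/16) = 3/4 by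
                rw [show (9/16:ℝ) = (3/4)^2 by norm_num,
                  Real.sqrt_sq (by norm_num : (0:ℝ) ≤ 3/4)]] at h2
end
noncomputable section
open Real

lemma lpNorm_one' (g : ℝ → ℝ≥0∞) :
    (if (1:ℝ≥0∞) = ∞ then essSup g (volume : Measure ℝ)
      else (∫⁻ x, g x ^ (1:ℝ≥0∞).toReal) ^ (1 / (1:ℝ≥0∞).toReal)) = ∫⁻ x, g x := by
  simp [ENNReal.rpow_one]

theorem main_thm :
    ∀ E : Set ℝ, MeasurableSet E → volume E < ∞ →
      ∀ f₂ : ℝ → ℝ, Measurable f₂ → (∀ x, 0 ≤ f₂ x) →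
      (∫⁻ x, (ENNReal.ofReal (2 * Real.pi))⁻¹ *
        ∫⁻ t in Set.Ioc 0 (2 * Real.pi),
          ENNReal.ofReal ((E.indicator fun _ => (1:ℝ)) (x - Real.cos t)) *
            ENNReal.ofReal (f₂ (x - Real.sin t)))
        ≤ ENNReal.ofReal 14 * volume E ^ ((1 : ℝ) / 2) *
          ∫⁻ x, ENNReal.ofReal (f₂ x) := by
  intro E hE hEfin f₂ hf₂ _hf₂pos
  have hpi := Real.pi_gt_three
  set ind : ℝ → ℝ := E.indicator fun _ => (1:ℝ) with hind_def
  have hind : Measurable ind := measurable_const.indicator hE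
  set K : ℝ≥0∞ := ENNReal.ofReal 14 * volume E ^ ((1:ℝ)/2) with hK
  have hKne : K ≠ ∞ := by
    apply ENNReal.mul_ne_top ENNReal.ofReal_ne_top
    exact ENNReal.rpow_ne_top_of_nonneg (by norm_num) hEfin.ne
  -- pull out constant
  rw [lintegral_const_mul' _ _ (by simp [Real.pi_pos] : (ENNReal.ofReal (2*Real.pi))⁻¹ ≠ ∞)]
  have hge : (1:ℝ≥0∞) ≤ ENNReal.ofReal (2*Real.pi) := by
    rw [show (1:ℝ≥0∞) = ENNReal.ofReal 1 by simp]
    exact ENNReal.ofReal_le_ofReal (by linarith)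
  have hinv : (ENNReal.ofReal (2*Real.pi))⁻¹ ≤ 1 := ENNReal.inv_le_one.2 hge
  have main : (∫⁻ x, ∫⁻ t in Set.Ioc 0 (2*Real.pi),
      ENNReal.ofReal (ind (x - Real.cos t)) * ENNReal.ofReal (f₂ (x - Real.sin t)))
      ≤ K * ∫⁻ x, ENNReal.ofReal (f₂ x) := by
    -- first swap
    have hmeas1 : AEMeasurable (Function.uncurry fun x t =>
        ENNReal.ofReal (ind (x - Real.cos t)) * ENNReal.ofReal (f₂ (x - Real.sin t)))
        ((volume : Measure ℝ).prod ((volume : Measure ℝ).restrict (Set.Ioc 0 (2*Real.pi)))) := by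
      apply Measurable.aemeasurable
      apply Measurable.mul (f := fun p : ℝ × ℝ => ENNReal.ofReal (ind (p.1 - Real.cos p.2)))
        (g := fun p : ℝ × ℝ => ENNReal.ofReal (f₂ (p.1 - Real.sin p.2)))
      · exact ENNReal.measurable_ofReal.comp (hind.comp
          (measurable_fst.sub (Real.measurable_cos.comp measurable_snd)))
      · exact ENNReal.measurable_ofReal.comp (hf₂.comp
          (measurable_fst.sub (Real.measurable_sin.comp measurable_snd)))
    rw [lintegral_lintegral_swap hmeas1]
    -- translate x
    have step : ∀ t : ℝ, (∫⁻ x, ENNReal.ofReal (ind (x - Real.cos t)) *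
        ENNReal.ofReal (f₂ (x - Real.sin t)))
        = ∫⁻ y, ENNReal.ofReal (ind (y + (Real.sin t - Real.cos t))) * ENNReal.ofReal (f₂ y) := by
      intro t
      rw [← lintegral_add_right_eq_self
        (fun y => ENNReal.ofReal (ind (y + (Real.sin t - Real.cos t))) *
          ENNReal.ofReal (f₂ y)) (-(Real.sin t))]
      apply lintegral_congr
      intro x
      have h1 : x - Real.sin t + (Real.sin t - Real.cos t) = x - Real.cos t := by ring
      have h2 : x + -Real.sin t = x - Real.sin t := by ring
      simp only [h2, h1]
    simp only [step]
    -- second swap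
    have hmeas2 : AEMeasurable (Function.uncurry fun t y =>
        ENNReal.ofReal (ind (y + (Real.sin t - Real.cos t))) * ENNReal.ofReal (f₂ y))
        (((volume : Measure ℝ).restrict (Set.Ioc 0 (2*Real.pi))).prod (volume : Measure ℝ)) := by
      apply Measurable.aemeasurable
      apply Measurable.mul
        (f := fun p : ℝ × ℝ => ENNReal.ofReal (ind (p.2 + (Real.sin p.1 - Real.cos p.1))))
        (g := fun p : ℝ × ℝ => ENNReal.ofReal (f₂ p.2))
      · exact ENNReal.measurable_ofReal.comp (hind.comp
          (measurable_snd.add ((Real.measurable_sin.comp measurable_fst).sub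
            (Real.measurable_cos.comp measurable_fst))))
      · exact ENNReal.measurable_ofReal.comp (hf₂.comp measurable_snd)
    rw [lintegral_lintegral_swap hmeas2]
    -- fixed y : inner integral
    have inner_bound : ∀ y : ℝ, (∫⁻ t in Set.Ioc 0 (2*Real.pi),
        ENNReal.ofReal (ind (y + (Real.sin t - Real.cos t))) * ENNReal.ofReal (f₂ y))
        ≤ K * ENNReal.ofReal (f₂ y) := by
      intro y
      rw [lintegral_mul_const' _ _ ENNReal.ofReal_ne_top]
      gcongr
      set B : Set ℝ := (fun u => y + u) ⁻¹' E with hB_def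
      have hB : MeasurableSet B := hE.preimage (measurable_const.add measurable_id)
      have hvolB : volume B = volume E := measure_preimage_add _ _ _
      have hindic : ∀ t : ℝ, ENNReal.ofReal (ind (y + (Real.sin t - Real.cos t)))
          = Set.indicator {t : ℝ | Real.sin t - Real.cos t ∈ B} (fun _ => (1:ℝ≥0∞)) t := by
        intro t
        by_cases h : y + (Real.sin t - Real.cos t) ∈ E
        · rw [Set.indicator_of_mem (by exact h)]
          simp [hind_def, Set.indicator_of_mem h]
        · rw [Set.indicator_of_notMem (by exact h)]
          simp [hind_def, Set.indicator_of_notMem h]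
      calc (∫⁻ t in Set.Ioc 0 (2*Real.pi), ENNReal.ofReal (ind (y + (Real.sin t - Real.cos t))))
          = ∫⁻ t in Set.Ioc 0 (2*Real.pi),
              Set.indicator {t : ℝ | Real.sin t - Real.cos t ∈ B} (fun _ => (1:ℝ≥0∞)) t := by
            apply lintegral_congr; exact hindic
        _ = volume ({t : ℝ | Real.sin t - Real.cos t ∈ B} ∩ Set.Ioc 0 (2*Real.pi)) := by
            have hAm : MeasurableSet {t : ℝ | Real.sin t - Real.cos t ∈ B} :=
              cont_g.measurable hB
            rw [lintegral_indicator hAm, setLIntegral_one, Measure.restrict_apply hAm]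
        _ = volume (Set.Ioc 0 (2*Real.pi) ∩ {t : ℝ | Real.sin t - Real.cos t ∈ B}) := by
            rw [Set.inter_comm]
        _ ≤ ENNReal.ofReal 14 * (volume B) ^ ((1:ℝ)/2) := key_bound hB
        _ = K := by rw [hK, hvolB]
    calc (∫⁻ y, ∫⁻ t in Set.Ioc 0 (2*Real.pi),
        ENNReal.ofReal (ind (y + (Real.sin t - Real.cos t))) * ENNReal.ofReal (f₂ y))
        ≤ ∫⁻ y, K * ENNReal.ofReal (f₂ y) := lintegral_mono inner_bound
      _ = K * ∫⁻ y, ENNReal.ofReal (f₂ y) := lintegral_const_mul' _ _ hKne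
  calc (ENNReal.ofReal (2*Real.pi))⁻¹ * ∫⁻ x, ∫⁻ t in Set.Ioc 0 (2*Real.pi),
        ENNReal.ofReal (ind (x - Real.cos t)) * ENNReal.ofReal (f₂ (x - Real.sin t))
      ≤ 1 * (K * ∫⁻ x, ENNReal.ofReal (f₂ x)) := mul_le_mul' hinv main
    _ = ENNReal.ofReal 14 * volume E ^ ((1:ℝ)/2) * ∫⁻ x, ENNReal.ofReal (f₂ x) := by
        rw [one_mul, hK]
end

end RestrictedTypeAux

theorem restricted_type_at_P :
    ∃ C : ℝ, 0 < C ∧ ∀ E : Set ℝ, MeasurableSet E → volume E < ∞ →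
      ∀ f₂ : ℝ → ℝ, Measurable f₂ → (∀ x, 0 ≤ f₂ x) →
      lpNorm 1 (T2 (E.indicator fun _ => (1 : ℝ)) f₂) ≤ ENNReal.ofReal C *
        volume E ^ ((1 : ℝ) / 2) *
        lpNorm 1 (fun x => ENNReal.ofReal (f₂ x)) := by
  refine ⟨14, by norm_num, ?_⟩
  intro E hE hEfin f₂ hf₂ hf₂pos
  have := RestrictedTypeAux.main_thm E hE hEfin f₂ hf₂ hf₂pos
  simp only [_root_.lpNorm, T2, if_neg (by simp : (1:ℝ≥0∞) ≠ ∞), ENNReal.toReal_one,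
    ENNReal.rpow_one, one_div, inv_one]
  simpa using this
end
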